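/- arXiv:0710.2113 — 7 statements merged into one kernel-verified Lean document; each statement's English description precedes it below -/
import Mathlib

section
/- The fixed point subalgebra of θ̂ on q⟨m⟩ has degree-i component equal to q_i (the ζ^i-eigenspace of θ, with index taken mod |θ|) for each i = 0,1,…,m−1; that is, q⟨m⟩^{θ̂} = q_0 ⋉ q_1 ⋉ … ⋉ q_{m−1}. -/
open Finset Module

/-- The bracket of the Takiff algebra `q⟨m⟩`, modelled on `Fin m → L`:
`[x⃗,y⃗]ₗ = ∑_{i+j=l} [xᵢ,yⱼ]`. -/
def takiffBracket {L : Type*} [LieRing L] (m : ℕ) (x y : Fin m → L) : Fin m → L :=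
  fun l => ∑ i : Fin m, ∑ j : Fin m,
    if (i : ℕ) + (j : ℕ) = (l : ℕ) then ⁅x i, y j⁆ else 0

/-- The fixed point subalgebra of `θ̂` on `q⟨m⟩` has degree-`i`
component equal to `q_i`, the `ζⁱ`-eigenspace of `θ` (index mod `|θ| = k`, which is
automatic since `ζᵏ = 1`); that is, `q⟨m⟩^{θ̂} = q₀ ⋉ q₁ ⋉ … ⋉ q_{m−1}`, a
subalgebra of `q⟨m⟩`. -/
theorem fixed_points_of_takiff_extension
    {𝕜 L : Type*} [Field 𝕜] [CharZero 𝕜] [LieRing L] [LieAlgebra 𝕜 L]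
    (k m : ℕ) (hk : 0 < k)
    (ζ : 𝕜) (hζ : IsPrimitiveRoot ζ k)
    (θ : L ≃ₗ[𝕜] L) (hbr : ∀ x y : L, θ ⁅x, y⁆ = ⁅θ x, θ y⁆)
    (hθk : (⇑θ)^[k] = id)
    (Θ : (Fin m → L) → (Fin m → L))
    (hΘ : ∀ x (i : Fin m), Θ x i = (ζ⁻¹) ^ (i : ℕ) • θ (x i)) :
    {x : Fin m → L | Θ x = x} =
      {x : Fin m → L | ∀ i : Fin m, θ (x i) = ζ ^ (i : ℕ) • x i} ∧
    (∀ x y : Fin m → L, Θ x = x → Θ y = y →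
      Θ (takiffBracket m x y) = takiffBracket m x y) := by
  have hζ0 : ζ ≠ 0 := hζ.ne_zero hk.ne'
  have key : ∀ x : Fin m → L, Θ x = x ↔ ∀ i : Fin m, θ (x i) = ζ ^ (i : ℕ) • x i := by
    intro x
    rw [funext_iff]
    apply forall_congr'
    intro i
    rw [hΘ, inv_pow, inv_smul_eq_iff₀ (pow_ne_zero _ hζ0)]
  constructor
  · ext x
    simpa using key x
  · intro x y hx hy
    rw [key] at hx hy
    funext l
    rw [hΘ]
    unfold takiffBracket
    rw [map_sum, smul_sum]
    apply Finset.sum_congr rfl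
    intro i _
    rw [map_sum, smul_sum]
    apply Finset.sum_congr rfl
    intro j _
    by_cases h : (i : ℕ) + (j : ℕ) = (l : ℕ)
    · rw [if_pos h, hbr, hx, hy, smul_lie, lie_smul, smul_smul, smul_smul,
        mul_assoc, ← pow_add, h, inv_pow, inv_mul_cancel₀ (pow_ne_zero _ hζ0), one_smul]
    · rw [if_neg h, map_zero, smul_zero]
end

section
/- Given a quasi-graded structure Γ = {q_i}_{i=0}^{k−1} on a Lie algebra q, the bracket [x_i, x_j]_Γ defined to equal [x_i, x_j] when i+j ≤ k−1 and 0 when i+j ≥ k satisfies the Jacobi identity, making the underlying vector space of q into an ℕ-graded Lie algebra C_Γ(q). -/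
open Finset Module

/-- Let `q = ⊕_{i=0}^{k−1} q_i` be a quasi-graded Lie algebra, encoded
by the projections `π i` onto the components `q_i = range (π i)`, so that
`[q_i, q_j] ⊆ q_{i+j}` whenever `i + j ≤ k − 1`.  Then the contracted bracket
`[x_i, x_j]_Γ = [x_i, x_j]` if `i+j ≤ k−1` and `0` if `i+j ≥ k` is bilinear and
alternating and satisfies the Jacobi identity, making the underlying vector space into
an ℕ-graded Lie algebra `C_Γ(q)`. -/
theorem quasi_graded_contraction_is_graded_lie_algebra
    {𝕜 L : Type*} [Field 𝕜] [CharZero 𝕜] [LieRing L] [LieAlgebra 𝕜 L]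
    (k : ℕ) (hk : 0 < k) (π : ℕ → (L →ₗ[𝕜] L))
    (hsum : ∀ x : L, ∑ i ∈ Finset.range k, π i x = x)
    (horth : ∀ i j, i ≠ j → ∀ x : L, π i (π j x) = 0)
    (hzero : ∀ i, k ≤ i → π i = 0)
    (hgrade : ∀ i j : ℕ, i + j ≤ k - 1 → ∀ x y : L,
      ⁅π i x, π j y⁆ ∈ LinearMap.range (π (i + j)))
    (BΓ : L → L → L)
    (hBΓ : ∀ x y : L, BΓ x y = ∑ i ∈ Finset.range k, ∑ j ∈ Finset.range k,
      if i + j ≤ k - 1 then ⁅π i x, π j y⁆ else 0) :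
    -- bilinearity
    (∀ (a : 𝕜) (x x' y : L), BΓ (a • x + x') y = a • BΓ x y + BΓ x' y) ∧
    (∀ (a : 𝕜) (x y y' : L), BΓ x (a • y + y') = a • BΓ x y + BΓ x y') ∧
    -- the bracket is alternating
    (∀ x : L, BΓ x x = 0) ∧
    -- the Jacobi identity
    (∀ x y z : L, BΓ (BΓ x y) z + BΓ (BΓ y z) x + BΓ (BΓ z x) y = 0) ∧
    -- ℕ-grading: `[q_i, q_j]_Γ ⊆ q_{i+j}` for all `i, j` (with `q_l = 0` for `l ≥ k`)
    (∀ i j : ℕ, ∀ x y : L, BΓ (π i x) (π j y) ∈ LinearMap.range (π (i + j))) := by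
  -- bracket with a fixed right argument is additive
  have sum_lie' : ∀ (s : Finset ℕ) (f : ℕ → L) (w : L),
      ⁅∑ i ∈ s, f i, w⁆ = ∑ i ∈ s, ⁅f i, w⁆ := fun s f w =>
    map_sum (AddMonoidHom.mk' (fun v => ⁅v, w⁆) fun a b => add_lie a b w) f s
  -- idempotence of the projections
  have hidem : ∀ i (x : L), π i (π i x) = π i x := by
    intro i x
    by_cases hi : i < k
    · have h := hsum (π i x)
      rwa [Finset.sum_eq_single_of_mem i (Finset.mem_range.mpr hi)
        (fun l _ hl => horth l i hl x)] at h
    · simp [hzero i (le_of_not_gt hi)]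
  -- components of a graded bracket
  have hcomp : ∀ i j l (x y : L), i + j ≤ k - 1 →
      π l ⁅π i x, π j y⁆ = if l = i + j then ⁅π i x, π j y⁆ else 0 := by
    intro i j l x y hij
    obtain ⟨w, hw⟩ := hgrade i j hij x y
    rw [← hw]
    split_ifs with h
    · subst h; exact hidem _ _
    · exact horth l (i + j) h w
  -- components of `BΓ x y`
  have hπB : ∀ l (x y : L), π l (BΓ x y) =
      ∑ i ∈ Finset.range k, ∑ j ∈ Finset.range k,
        if i + j = l ∧ i + j ≤ k - 1 then ⁅π i x, π j y⁆ else 0 := by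
    intro l x y
    rw [hBΓ, map_sum]
    refine Finset.sum_congr rfl fun i _ => ?_
    rw [map_sum]
    refine Finset.sum_congr rfl fun j _ => ?_
    by_cases h : i + j ≤ k - 1
    · rw [if_pos h, hcomp i j l x y h]
      split_ifs with h1 h2 h2
      · rfl
      · exact absurd ⟨h1.symm, h⟩ h2
      · exact absurd h2.1.symm h1
      · rfl
    · rw [if_neg h, map_zero, if_neg fun hc => h hc.2]
  -- `BΓ` of pure components
  have hBπ : ∀ i j (x y : L), BΓ (π i x) (π j y) =
      if i + j ≤ k - 1 then ⁅π i x, π j y⁆ else 0 := by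
    intro i j x y
    rw [hBΓ]
    rw [Finset.sum_eq_single i
      (fun b _ hb => Finset.sum_eq_zero fun j' _ => by
        simp [horth b i hb x])
      (fun hi => Finset.sum_eq_zero fun j' _ => by
        simp [hzero i (by simpa using hi)])]
    rw [Finset.sum_eq_single j
      (fun b _ hb => by simp [horth b j hb y])
      (fun hj => by simp [hzero j (by simpa using hj)])]
    rw [hidem, hidem]
  -- rotation of a triple sum
  have hrot : ∀ f : ℕ → ℕ → ℕ → L,
      (∑ i ∈ Finset.range k, ∑ j ∈ Finset.range k, ∑ m ∈ Finset.range k, f i j m)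
        = ∑ i ∈ Finset.range k, ∑ j ∈ Finset.range k, ∑ m ∈ Finset.range k, f j m i := by
    intro f
    calc (∑ i ∈ Finset.range k, ∑ j ∈ Finset.range k, ∑ m ∈ Finset.range k, f i j m)
        = ∑ i ∈ Finset.range k, ∑ m ∈ Finset.range k, ∑ j ∈ Finset.range k, f i j m :=
          Finset.sum_congr rfl fun i _ => Finset.sum_comm
      _ = ∑ m ∈ Finset.range k, ∑ i ∈ Finset.range k, ∑ j ∈ Finset.range k, f i j m :=
          Finset.sum_comm
      _ = ∑ i ∈ Finset.range k, ∑ j ∈ Finset.range k, ∑ m ∈ Finset.range k, f j m i := rfl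
  -- the triple sum expansion of iterated brackets
  have htriple : ∀ x y z : L, BΓ (BΓ x y) z =
      ∑ i ∈ Finset.range k, ∑ j ∈ Finset.range k, ∑ m ∈ Finset.range k,
        if i + j + m ≤ k - 1 then ⁅⁅π i x, π j y⁆, π m z⁆ else 0 := by
    intro x y z
    have step1 : ∀ l m : ℕ, (if l + m ≤ k - 1 then ⁅π l (BΓ x y), π m z⁆ else 0) =
        ∑ i ∈ Finset.range k, ∑ j ∈ Finset.range k,
          if i + j = l ∧ i + j + m ≤ k - 1 then ⁅⁅π i x, π j y⁆, π m z⁆ else 0 := by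
      intro l m
      by_cases h : l + m ≤ k - 1
      · rw [if_pos h, hπB l x y, sum_lie']
        refine Finset.sum_congr rfl fun i _ => ?_
        rw [sum_lie']
        refine Finset.sum_congr rfl fun j _ => ?_
        by_cases hc : i + j = l ∧ i + j ≤ k - 1
        · rw [if_pos hc, if_pos ⟨hc.1, by omega⟩]
        · rw [if_neg hc, zero_lie, if_neg fun h' => hc ⟨h'.1, by omega⟩]
      · rw [if_neg h]
        symm
        refine Finset.sum_eq_zero fun i _ => Finset.sum_eq_zero fun j _ => ?_
        rw [if_neg]
        rintro ⟨h1, h2⟩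
        omega
    have hl : ∀ m i j : ℕ, (∑ l ∈ Finset.range k,
        if i + j = l ∧ i + j + m ≤ k - 1 then ⁅⁅π i x, π j y⁆, π m z⁆ else 0) =
        if i + j + m ≤ k - 1 then ⁅⁅π i x, π j y⁆, π m z⁆ else 0 := by
      intro m i j
      have e1 : (∑ l ∈ Finset.range k,
          if i + j = l ∧ i + j + m ≤ k - 1 then ⁅⁅π i x, π j y⁆, π m z⁆ else 0) =
          ∑ l ∈ Finset.range k,
            if i + j = l then (if i + j + m ≤ k - 1 then ⁅⁅π i x, π j y⁆, π m z⁆ else 0)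
            else 0 := by
        refine Finset.sum_congr rfl fun l _ => ?_
        split_ifs <;> tauto
      rw [e1, Finset.sum_ite_eq]
      split_ifs with h1 h2 h2
      · rfl
      · rfl
      · exact absurd (Finset.mem_range.mpr (by omega)) h1
      · rfl
    calc BΓ (BΓ x y) z
        = ∑ l ∈ Finset.range k, ∑ m ∈ Finset.range k,
            if l + m ≤ k - 1 then ⁅π l (BΓ x y), π m z⁆ else 0 := hBΓ _ _
      _ = ∑ l ∈ Finset.range k, ∑ m ∈ Finset.range k, ∑ i ∈ Finset.range k,
            ∑ j ∈ Finset.range k,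
            if i + j = l ∧ i + j + m ≤ k - 1 then ⁅⁅π i x, π j y⁆, π m z⁆ else 0 :=
          Finset.sum_congr rfl fun l _ => Finset.sum_congr rfl fun m _ => step1 l m
      _ = ∑ m ∈ Finset.range k, ∑ l ∈ Finset.range k, ∑ i ∈ Finset.range k,
            ∑ j ∈ Finset.range k,
            if i + j = l ∧ i + j + m ≤ k - 1 then ⁅⁅π i x, π j y⁆, π m z⁆ else 0 :=
          Finset.sum_comm
      _ = ∑ m ∈ Finset.range k, ∑ i ∈ Finset.range k, ∑ l ∈ Finset.range k,
            ∑ j ∈ Finset.range k,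
            if i + j = l ∧ i + j + m ≤ k - 1 then ⁅⁅π i x, π j y⁆, π m z⁆ else 0 :=
          Finset.sum_congr rfl fun m _ => Finset.sum_comm
      _ = ∑ m ∈ Finset.range k, ∑ i ∈ Finset.range k, ∑ j ∈ Finset.range k,
            ∑ l ∈ Finset.range k,
            if i + j = l ∧ i + j + m ≤ k - 1 then ⁅⁅π i x, π j y⁆, π m z⁆ else 0 :=
          Finset.sum_congr rfl fun m _ => Finset.sum_congr rfl fun i _ => Finset.sum_comm
      _ = ∑ m ∈ Finset.range k, ∑ i ∈ Finset.range k, ∑ j ∈ Finset.range k,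
            if i + j + m ≤ k - 1 then ⁅⁅π i x, π j y⁆, π m z⁆ else 0 :=
          Finset.sum_congr rfl fun m _ => Finset.sum_congr rfl fun i _ =>
            Finset.sum_congr rfl fun j _ => hl m i j
      _ = ∑ i ∈ Finset.range k, ∑ m ∈ Finset.range k, ∑ j ∈ Finset.range k,
            if i + j + m ≤ k - 1 then ⁅⁅π i x, π j y⁆, π m z⁆ else 0 :=
          Finset.sum_comm
      _ = ∑ i ∈ Finset.range k, ∑ j ∈ Finset.range k, ∑ m ∈ Finset.range k,
            if i + j + m ≤ k - 1 then ⁅⁅π i x, π j y⁆, π m z⁆ else 0 :=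
          Finset.sum_congr rfl fun i _ => Finset.sum_comm
  refine ⟨?_, ?_, ?_, ?_, ?_⟩
  · -- left bilinearity
    intro a x x' y
    rw [hBΓ, hBΓ, hBΓ, Finset.smul_sum, ← Finset.sum_add_distrib]
    refine Finset.sum_congr rfl fun i _ => ?_
    rw [Finset.smul_sum, ← Finset.sum_add_distrib]
    refine Finset.sum_congr rfl fun j _ => ?_
    split_ifs with h
    · rw [map_add, map_smul, add_lie, smul_lie]
    · simp
  · -- right bilinearity
    intro a x y y'
    rw [hBΓ, hBΓ, hBΓ, Finset.smul_sum, ← Finset.sum_add_distrib]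
    refine Finset.sum_congr rfl fun i _ => ?_
    rw [Finset.smul_sum, ← Finset.sum_add_distrib]
    refine Finset.sum_congr rfl fun j _ => ?_
    split_ifs with h
    · rw [map_add, map_smul, lie_add, lie_smul]
    · simp
  · -- alternating
    intro x
    have h2 : BΓ x x + BΓ x x = 0 := by
      have hswap : BΓ x x = ∑ i ∈ Finset.range k, ∑ j ∈ Finset.range k,
          if j + i ≤ k - 1 then ⁅π j x, π i x⁆ else 0 := by
        rw [hBΓ, Finset.sum_comm]
      nth_rewrite 2 [hswap]
      rw [hBΓ, ← Finset.sum_add_distrib]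
      refine Finset.sum_eq_zero fun i _ => ?_
      rw [← Finset.sum_add_distrib]
      refine Finset.sum_eq_zero fun j _ => ?_
      split_ifs with h1 h2 h2
      · rw [← lie_skew]; abel
      · omega
      · omega
      · simp
    have h3 : (2 : 𝕜) • BΓ x x = 0 := by
      rw [two_smul]; exact h2
    rcases smul_eq_zero.mp h3 with h | h
    · exact absurd h two_ne_zero
    · exact h
  · -- Jacobi identity
    intro x y z
    rw [htriple x y z, htriple y z x, htriple z x y]
    -- rotate the second sum: move the last index to the front
    have rot2 : (∑ i ∈ Finset.range k, ∑ j ∈ Finset.range k, ∑ m ∈ Finset.range k,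
        if i + j + m ≤ k - 1 then ⁅⁅π i y, π j z⁆, π m x⁆ else 0) =
        ∑ i ∈ Finset.range k, ∑ j ∈ Finset.range k, ∑ m ∈ Finset.range k,
          if j + m + i ≤ k - 1 then ⁅⁅π j y, π m z⁆, π i x⁆ else 0 :=
      hrot fun a b c => if a + b + c ≤ k - 1 then ⁅⁅π a y, π b z⁆, π c x⁆ else 0
    have rot3 : (∑ i ∈ Finset.range k, ∑ j ∈ Finset.range k, ∑ m ∈ Finset.range k,
        if i + j + m ≤ k - 1 then ⁅⁅π i z, π j x⁆, π m y⁆ else 0) =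
        ∑ i ∈ Finset.range k, ∑ j ∈ Finset.range k, ∑ m ∈ Finset.range k,
          if m + i + j ≤ k - 1 then ⁅⁅π m z, π i x⁆, π j y⁆ else 0 :=
      (hrot fun a b c => if a + b + c ≤ k - 1 then ⁅⁅π a z, π b x⁆, π c y⁆ else 0).trans
        (hrot fun a b c => if b + c + a ≤ k - 1 then ⁅⁅π b z, π c x⁆, π a y⁆ else 0)
    rw [rot2, rot3, ← Finset.sum_add_distrib, ← Finset.sum_add_distrib]
    refine Finset.sum_eq_zero fun i _ => ?_
    rw [← Finset.sum_add_distrib, ← Finset.sum_add_distrib]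
    refine Finset.sum_eq_zero fun j _ => ?_
    rw [← Finset.sum_add_distrib, ← Finset.sum_add_distrib]
    refine Finset.sum_eq_zero fun m _ => ?_
    have hc1 : (i + j + m ≤ k - 1) ↔ (j + m + i ≤ k - 1) := by omega
    have hc2 : (i + j + m ≤ k - 1) ↔ (m + i + j ≤ k - 1) := by omega
    split_ifs with h1 h2 h3 h2 h3 h3 h3 <;> try omega
    · rw [← lie_skew ⁅π i x, π j y⁆ (π m z), ← lie_skew ⁅π j y, π m z⁆ (π i x),
        ← lie_skew ⁅π m z, π i x⁆ (π j y)]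
      have := lie_jacobi (π m z) (π i x) (π j y)
      -- ⁅z,⁅x,y⁆⁆ + ⁅x,⁅y,z⁆⁆ + ⁅y,⁅z,x⁆⁆ = 0
      have h' := lie_jacobi (π i x) (π j y) (π m z)
      linear_combination (norm := abel) -h'
    · simp
  · -- grading
    intro i j x y
    rw [hBπ]
    split_ifs with h
    · exact hgrade i j h x y
    · exact Submodule.zero_mem _
end

section
/- Let θ ∈ Aut(q) have order k with fixed-point subalgebra q_0. Then the direct sum q_0 ∔ q admits a quasi-graded structure of order k+1 given by s_0 = {(x,x) : x ∈ q_0}, s_i = q_i for 1 ≤ i ≤ k−1, and s_k = q_0 ⊂ q, and the corresponding quasi-graded contraction is isomorphic to q_0 ⋉ q_1 ⋉ … ⋉ q_{k−1} ⋉ q_0. -/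
open Finset Module

/-- The componentwise Lie bracket on the direct sum `q ∔ q` (modelled as `L × L`). -/
def prodBracket {L : Type*} [LieRing L] (u v : L × L) : L × L :=
  (⁅u.1, v.1⁆, ⁅u.2, v.2⁆)

/-- Let `θ ∈ Aut(q)` have order `k` with eigenspace decomposition
`q = ⊕_{i ∈ ℤ_k} q_i` (encoded by the eigenprojections `P i`, `q_i = range (P i)`) and
fixed-point subalgebra `q₀`.  Then the direct sum `q₀ ∔ q` (modelled as the subalgebra
`q₀ × q` of `L × L`) admits a quasi-graded structure of order `k+1` given by
`s₀ = {(x,x) : x ∈ q₀}`, `s_i = q_i` (`1 ≤ i ≤ k−1`) and `s_k = q₀ ⊂ q`, and the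
corresponding quasi-graded contraction is isomorphic to
`q₀ ⋉ q₁ ⋉ … ⋉ q_{k−1} ⋉ q₀` (the fixed-point subalgebra `q⟨k+1⟩_0` of the Takiff
algebra `q⟨k+1⟩`, whose degree-`l` component is `q_{l mod k}`, with the truncated
bracket). -/
theorem isotropy_extended_quasi_grading_and_contraction
    {𝕜 L : Type*} [Field 𝕜] [CharZero 𝕜] [LieRing L] [LieAlgebra 𝕜 L]
    (k : ℕ) (hk : 0 < k) (ζ : 𝕜) (hζ : IsPrimitiveRoot ζ k)
    (θ : Module.End 𝕜 L) (hbr : ∀ x y : L, θ ⁅x, y⁆ = ⁅θ x, θ y⁆)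
    (hθk : θ ^ k = 1)
    (P : ℕ → (L →ₗ[𝕜] L))
    (hsum : ∀ x : L, ∑ i ∈ Finset.range k, P i x = x)
    (horth : ∀ i j, i ≠ j → ∀ x : L, P i (P j x) = 0)
    (hPzero : ∀ i, k ≤ i → P i = 0)
    (hPeig : ∀ i, i < k → ∀ x : L, θ (P i x) = ζ ^ i • P i x)
    (hgrade : ∀ i j, i < k → j < k → ∀ x y : L,
      ⁅P i x, P j y⁆ ∈ LinearMap.range (P ((i + j) % k)))
    -- the subspaces `s₀, …, s_k` of `q₀ ∔ q ⊆ L × L`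
    (S : ℕ → Submodule 𝕜 (L × L))
    (hS0 : S 0 = LinearMap.range ((P 0).prod (P 0)))
    (hSmid : ∀ i, 1 ≤ i → i ≤ k - 1 →
      S i = LinearMap.range ((0 : L →ₗ[𝕜] L).prod (P i)))
    (hSk : S k = LinearMap.range ((0 : L →ₗ[𝕜] L).prod (P 0)))
    -- the projections of `q₀ ∔ q` onto the `s_i`
    (Pr : ℕ → ((L × L) →ₗ[𝕜] (L × L)))
    (hPr0 : ∀ u : L × L, Pr 0 u = (P 0 u.1, P 0 u.1))
    (hPrmid : ∀ i, 1 ≤ i → i ≤ k - 1 → ∀ u : L × L, Pr i u = (0, P i u.2))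
    (hPrk : ∀ u : L × L, Pr k u = (0, P 0 u.2 - P 0 u.1))
    -- the contracted bracket of the quasi-graded structure `Γ = {s_i}` on `q₀ ∔ q`
    (BΓ : (L × L) → (L × L) → (L × L))
    (hBΓ : ∀ u v : L × L, BΓ u v = ∑ i ∈ Finset.range (k + 1), ∑ j ∈ Finset.range (k + 1),
      if i + j ≤ k then prodBracket (Pr i u) (Pr j v) else 0)
    -- the comparison map towards `q₀ ⋉ q₁ ⋉ … ⋉ q_{k−1} ⋉ q₀ ⊆ q⟨k+1⟩`
    (e : (L × L) →ₗ[𝕜] (Fin (k + 1) → L))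
    (he : ∀ (u : L × L) (l : Fin (k + 1)),
      e u l = if (l : ℕ) = 0 then (Pr 0 u).1 else (Pr (l : ℕ) u).2) :
    -- `{s_i}` is a decomposition of `q₀ ∔ q` …
    (⨆ i : Fin (k + 1), S (i : ℕ)) = (LinearMap.range (P 0)).prod ⊤ ∧
    iSupIndep (fun i : Fin (k + 1) => S (i : ℕ)) ∧
    -- … which is quasi-graded of order `k+1`: `[s_i, s_j] ⊆ s_{i+j}` for `i + j ≤ k`
    (∀ i j, i + j ≤ k → ∀ u v : L × L, u ∈ S i → v ∈ S j →
      prodBracket u v ∈ S (i + j)) ∧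
    -- … and `e` is an isomorphism from the quasi-graded contraction of `q₀ ∔ q`
    -- onto `q₀ ⋉ q₁ ⋉ … ⋉ q_{k−1} ⋉ q₀` with its truncated (Takiff) bracket:
    (∀ u : L × L, u ∈ (LinearMap.range (P 0)).prod (⊤ : Submodule 𝕜 L) →
      ∀ l : Fin (k + 1), e u l ∈ LinearMap.range (P ((l : ℕ) % k))) ∧
    Set.InjOn e ((LinearMap.range (P 0)).prod (⊤ : Submodule 𝕜 L)) ∧
    (∀ z : Fin (k + 1) → L, (∀ l : Fin (k + 1), z l ∈ LinearMap.range (P ((l : ℕ) % k))) →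
      ∃ u ∈ (LinearMap.range (P 0)).prod (⊤ : Submodule 𝕜 L), e u = z) ∧
    (∀ u v : L × L, u ∈ (LinearMap.range (P 0)).prod (⊤ : Submodule 𝕜 L) →
      v ∈ (LinearMap.range (P 0)).prod (⊤ : Submodule 𝕜 L) →
      e (BΓ u v) = takiffBracket (k + 1) (e u) (e v)) := by
  clear hζ hbr hθk hPeig
  -- basic projection identities
  have hproj : ∀ i x, P i (P i x) = P i x := by
    intro i x
    by_cases hi : i < k
    · have h1 : ∑ j ∈ Finset.range k, P i (P j x) = P i x := by
        rw [← map_sum, hsum]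
      calc P i (P i x) = ∑ j ∈ Finset.range k, P i (P j x) := by
            rw [Finset.sum_eq_single i (fun j _ hj => horth i j (Ne.symm hj) x)
              (fun h => absurd (Finset.mem_range.mpr hi) h)]
        _ = P i x := h1
    · simp [hPzero i (le_of_not_gt hi)]
  have hmemP : ∀ i (z : L), z ∈ LinearMap.range (P i) ↔ P i z = z := by
    intro i z
    constructor
    · rintro ⟨y, rfl⟩; exact hproj i y
    · intro h; exact ⟨z, h⟩
  have hkill : ∀ i j, i ≠ j → ∀ z ∈ LinearMap.range (P j), P i z = 0 := by
    rintro i j hij z ⟨y, rfl⟩; exact horth i j hij y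
  have hbrP : ∀ p q : ℕ, p < k → q < k → ∀ x y : L, P p x = x → P q y = y →
      P ((p + q) % k) ⁅x, y⁆ = ⁅x, y⁆ := by
    intro p q hp hq x y hx hy
    refine (hmemP _ _).1 ?_
    rw [← hx, ← hy]; exact hgrade p q hp hq x y
  have hbrP0 : ∀ p q l : ℕ, p < k → q < k → l ≠ (p + q) % k → ∀ x y : L, P p x = x → P q y = y →
      P l ⁅x, y⁆ = 0 := by
    intro p q l hp hq hl x y hx hy
    have h2 := horth l ((p + q) % k) hl ⁅x, y⁆
    rwa [hbrP p q hp hq x y hx hy] at h2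
  -- membership descriptions of the pieces
  have hmemS0 : ∀ u : L × L, u ∈ LinearMap.range ((P 0).prod (P 0)) ↔
      P 0 u.1 = u.1 ∧ u.2 = u.1 := by
    intro u
    constructor
    · rintro ⟨y, rfl⟩
      exact ⟨hproj 0 y, rfl⟩
    · rintro ⟨h1, h2⟩
      exact ⟨u.1, Prod.ext h1 (by simpa [h2] using h1)⟩
  have hmemSm : ∀ m (u : L × L), u ∈ LinearMap.range ((0 : L →ₗ[𝕜] L).prod (P m)) ↔
      u.1 = 0 ∧ P m u.2 = u.2 := by
    intro m u
    constructor
    · rintro ⟨y, rfl⟩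
      exact ⟨rfl, hproj m y⟩
    · rintro ⟨h1, h2⟩
      exact ⟨u.2, Prod.ext (by simp [h1]) h2⟩
  -- projection / subspace compatibility
  have hPrfix : ∀ i ≤ k, ∀ u ∈ S i, Pr i u = u := by
    intro i hi u hu
    rcases Nat.eq_zero_or_pos i with rfl | hi1
    · rw [hS0] at hu
      obtain ⟨h1, h2⟩ := (hmemS0 u).1 hu
      rw [hPr0]
      exact Prod.ext h1 (by simpa [h2] using h1)
    · rcases eq_or_lt_of_le hi with rfl | hik
      · rw [hSk] at hu
        obtain ⟨h1, h2⟩ := (hmemSm 0 u).1 hu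
        rw [hPrk, h1]
        exact Prod.ext h1.symm (by simp [h2])
      · have hi2 : i ≤ k - 1 := by omega
        rw [hSmid i hi1 hi2] at hu
        obtain ⟨h1, h2⟩ := (hmemSm i u).1 hu
        rw [hPrmid i hi1 hi2]
        exact Prod.ext h1.symm h2
  have hPrkill : ∀ i ≤ k, ∀ j ≤ k, i ≠ j → ∀ u ∈ S j, Pr i u = 0 := by
    intro i hi j hj hij u hu
    -- first extract the structure of u from membership in S j
    have hustr : ∃ m < k, (P m u.2 = u.2) ∧ (m = j % k) ∧ (j = 0 → u.1 = u.2 ∧ P 0 u.1 = u.1)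
        ∧ (j ≠ 0 → u.1 = 0) := by
      rcases Nat.eq_zero_or_pos j with rfl | hj1
      · rw [hS0] at hu
        obtain ⟨h1, h2⟩ := (hmemS0 u).1 hu
        exact ⟨0, hk, by rw [h2]; exact h1, by simp, fun _ => ⟨h2.symm, h1⟩, by simp⟩
      · rcases eq_or_lt_of_le hj with rfl | hjk
        · rw [hSk] at hu
          obtain ⟨h1, h2⟩ := (hmemSm 0 u).1 hu
          exact ⟨0, hk, h2, by simp [Nat.mod_self], fun h => absurd h (by omega), fun _ => h1⟩
        · rw [hSmid j hj1 (by omega)] at hu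
          obtain ⟨h1, h2⟩ := (hmemSm j u).1 hu
          exact ⟨j, hjk, h2, (Nat.mod_eq_of_lt hjk).symm, fun h => absurd h (by omega),
            fun _ => h1⟩
    obtain ⟨m, hm, hPm, hmj, hj0, hjne⟩ := hustr
    rcases Nat.eq_zero_or_pos i with rfl | hi1
    · have hju : u.1 = 0 := hjne (by omega)
      rw [hPr0, hju, map_zero]
      rfl
    · rcases eq_or_lt_of_le hi with hik' | hik
      · -- i = k, so j ≠ k
        rw [hik', hPrk]
        rcases Nat.eq_zero_or_pos j with rfl | hj1
        · obtain ⟨h1, h2⟩ := hj0 rfl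
          rw [← h1, Prod.mk_eq_zero]
          exact ⟨rfl, by simp⟩
        · have hju : u.1 = 0 := hjne (by omega)
          have hjlt : j < k := by omega
          have hm' : m = j := by rw [hmj, Nat.mod_eq_of_lt hjlt]
          have : P 0 u.2 = 0 := hkill 0 j (by omega) u.2 ⟨u.2, by rw [← hm']; exact hPm⟩
          rw [hju, this, map_zero, Prod.mk_eq_zero]
          exact ⟨rfl, by simp⟩
      · -- 1 ≤ i ≤ k - 1
        rw [hPrmid i hi1 (by omega)]
        have : P i u.2 = 0 := by
          refine hkill i m ?_ u.2 ⟨u.2, hPm⟩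
          rcases Nat.eq_zero_or_pos j with rfl | hj1
          · simp at hmj; omega
          · rcases eq_or_lt_of_le hj with rfl | hjk
            · rw [hmj, Nat.mod_self]; omega
            · rw [hmj, Nat.mod_eq_of_lt hjk]; omega
        rw [this, Prod.mk_eq_zero]
        exact ⟨rfl, rfl⟩
  refine ⟨?_, ?_, ?_, ?_, ?_, ?_, ?_⟩
  · -- the supremum
    apply le_antisymm
    · refine iSup_le fun i => ?_
      intro u hu
      rw [Submodule.mem_prod]
      refine ⟨?_, trivial⟩
      rcases Nat.eq_zero_or_pos (i : ℕ) with h0 | hi1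
      · rw [h0, hS0] at hu
        exact ⟨u.1, ((hmemS0 u).1 hu).1⟩
      · have hik : (i : ℕ) ≤ k := Nat.lt_succ_iff.mp i.isLt
        rcases eq_or_lt_of_le hik with he' | hik'
        · rw [he', hSk] at hu
          rw [((hmemSm 0 u).1 hu).1]
          exact Submodule.zero_mem _
        · rw [hSmid _ hi1 (by omega)] at hu
          rw [((hmemSm _ u).1 hu).1]
          exact Submodule.zero_mem _
    · rintro ⟨a, b⟩ hab
      rw [Submodule.mem_prod] at hab
      have ha : P 0 a = a := (hmemP 0 a).1 hab.1
      have h1 : (a, b) = (a, a) + ∑ j ∈ Finset.range k, ((0 : L), P j (b - a)) := by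
        have h2 : ∑ j ∈ Finset.range k, ((0 : L), P j (b - a)) = ((0 : L), b - a) := by
          rw [Prod.ext_iff]
          constructor
          · rw [Prod.fst_sum]; simp
          · rw [Prod.snd_sum]; exact hsum (b - a)
        rw [h2, Prod.mk_add_mk]
        simp
      rw [h1]
      refine add_mem (Submodule.mem_iSup_of_mem (0 : Fin (k + 1)) ?_) ?_
      · have : ((0 : Fin (k + 1)) : ℕ) = 0 := rfl
        rw [this, hS0]
        exact ⟨a, Prod.ext ha ha⟩
      · refine Submodule.sum_mem _ fun j hj => ?_
        have hjk : j < k := Finset.mem_range.mp hj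
        rcases Nat.eq_zero_or_pos j with rfl | hj1
        · refine Submodule.mem_iSup_of_mem (Fin.last k) ?_
          have : ((Fin.last k : Fin (k + 1)) : ℕ) = k := rfl
          rw [this, hSk]
          exact ⟨b - a, by simp⟩
        · refine Submodule.mem_iSup_of_mem ⟨j, by omega⟩ ?_
          rw [hSmid j hj1 (by omega)]
          exact ⟨b - a, by simp⟩
  · -- independence
    intro i
    refine Submodule.disjoint_def.mpr fun u hui huj => ?_
    have hik : (i : ℕ) ≤ k := Nat.lt_succ_iff.mp i.isLt
    have h1 : Pr (i : ℕ) u = u := hPrfix _ hik u hui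
    have h2 : Pr (i : ℕ) u = 0 := by
      have hle : (⨆ j, ⨆ _ : j ≠ i, S ((j : Fin (k + 1)) : ℕ)) ≤ LinearMap.ker (Pr (i : ℕ)) := by
        refine iSup_le fun j => iSup_le fun hji => ?_
        intro w hw
        refine LinearMap.mem_ker.mpr (hPrkill _ hik _ (Nat.lt_succ_iff.mp j.isLt) ?_ w hw)
        exact fun h => hji (Fin.ext h.symm)
      exact hle huj
    rw [← h1, h2]
  · -- quasi-grading
    intro i j hij u v hu hv
    by_cases hi0 : i = 0
    · subst hi0
      by_cases hj0 : j = 0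
      · subst hj0
        rw [hS0] at hu hv
        obtain ⟨hu1, hu2⟩ := (hmemS0 u).1 hu
        obtain ⟨hv1, hv2⟩ := (hmemS0 v).1 hv
        show prodBracket u v ∈ S 0
        rw [hS0]
        refine (hmemS0 _).2 ⟨?_, ?_⟩
        · have := hbrP 0 0 hk hk u.1 v.1 hu1 hv1
          simpa [prodBracket] using this
        · show ⁅u.2, v.2⁆ = ⁅u.1, v.1⁆
          rw [hu2, hv2]
      · rw [hS0] at hu
        obtain ⟨hu1, hu2⟩ := (hmemS0 u).1 hu
        have hu2' : P 0 u.2 = u.2 := by rw [hu2]; exact hu1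
        by_cases hjk : j = k
        · rw [hjk, hSk] at hv
          obtain ⟨hv1, hv2⟩ := (hmemSm 0 v).1 hv
          rw [Nat.zero_add, hjk, hSk]
          refine (hmemSm 0 _).2 ⟨?_, ?_⟩
          · show ⁅u.1, v.1⁆ = 0
            rw [hv1, lie_zero]
          · show P 0 ⁅u.2, v.2⁆ = ⁅u.2, v.2⁆
            have := hbrP 0 0 hk hk u.2 v.2 hu2' hv2
            simpa using this
        · have hj1 : 1 ≤ j := by omega
          have hjlt : j < k := by omega
          rw [hSmid j hj1 (by omega)] at hv
          obtain ⟨hv1, hv2⟩ := (hmemSm j v).1 hv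
          rw [Nat.zero_add, hSmid j hj1 (by omega)]
          refine (hmemSm j _).2 ⟨?_, ?_⟩
          · show ⁅u.1, v.1⁆ = 0
            rw [hv1, lie_zero]
          · show P j ⁅u.2, v.2⁆ = ⁅u.2, v.2⁆
            have := hbrP 0 j hk hjlt u.2 v.2 hu2' hv2
            rwa [Nat.zero_add, Nat.mod_eq_of_lt hjlt] at this
    · by_cases hj0 : j = 0
      · subst hj0
        rw [hS0] at hv
        obtain ⟨hv1, hv2⟩ := (hmemS0 v).1 hv
        have hv2' : P 0 v.2 = v.2 := by rw [hv2]; exact hv1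
        by_cases hik : i = k
        · rw [hik, hSk] at hu
          obtain ⟨hu1, hu2⟩ := (hmemSm 0 u).1 hu
          show prodBracket u v ∈ S i
          rw [hik, hSk]
          refine (hmemSm 0 _).2 ⟨?_, ?_⟩
          · show ⁅u.1, v.1⁆ = 0
            rw [hu1, zero_lie]
          · show P 0 ⁅u.2, v.2⁆ = ⁅u.2, v.2⁆
            have := hbrP 0 0 hk hk u.2 v.2 hu2 hv2'
            simpa using this
        · have hi1 : 1 ≤ i := by omega
          have hilt : i < k := by omega
          rw [hSmid i hi1 (by omega)] at hu
          obtain ⟨hu1, hu2⟩ := (hmemSm i u).1 hu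
          show prodBracket u v ∈ S i
          rw [hSmid i hi1 (by omega)]
          refine (hmemSm i _).2 ⟨?_, ?_⟩
          · show ⁅u.1, v.1⁆ = 0
            rw [hu1, zero_lie]
          · show P i ⁅u.2, v.2⁆ = ⁅u.2, v.2⁆
            have := hbrP i 0 hilt hk u.2 v.2 hu2 hv2'
            rwa [Nat.add_zero, Nat.mod_eq_of_lt hilt] at this
      · have hilt : i < k := by omega
        have hjlt : j < k := by omega
        rw [hSmid i (by omega) (by omega)] at hu
        rw [hSmid j (by omega) (by omega)] at hv
        obtain ⟨hu1, hu2⟩ := (hmemSm i u).1 hu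
        obtain ⟨hv1, hv2⟩ := (hmemSm j v).1 hv
        have hbr2 := hbrP i j hilt hjlt u.2 v.2 hu2 hv2
        by_cases hsk : i + j = k
        · rw [hsk, hSk]
          refine (hmemSm 0 _).2 ⟨?_, ?_⟩
          · show ⁅u.1, v.1⁆ = 0
            rw [hu1, zero_lie]
          · show P 0 ⁅u.2, v.2⁆ = ⁅u.2, v.2⁆
            rwa [hsk, Nat.mod_self] at hbr2
        · have hslt : i + j < k := by omega
          rw [hSmid (i + j) (by omega) (by omega)]
          refine (hmemSm (i + j) _).2 ⟨?_, ?_⟩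
          · show ⁅u.1, v.1⁆ = 0
            rw [hu1, zero_lie]
          · show P (i + j) ⁅u.2, v.2⁆ = ⁅u.2, v.2⁆
            rwa [Nat.mod_eq_of_lt hslt] at hbr2
  · -- e maps into the graded pieces
    intro u hu l
    rw [Submodule.mem_prod] at hu
    have ha : P 0 u.1 = u.1 := (hmemP 0 u.1).1 hu.1
    rw [he]
    by_cases hl0 : (l : ℕ) = 0
    · rw [if_pos hl0, hl0, Nat.zero_mod, hPr0]
      exact ⟨u.1, rfl⟩
    · rw [if_neg hl0]
      by_cases hlk : (l : ℕ) = k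
      · rw [hlk, Nat.mod_self, hPrk]
        exact sub_mem ⟨u.2, rfl⟩ ⟨u.1, rfl⟩
      · have hlt : (l : ℕ) < k := by have := l.isLt; omega
        rw [hPrmid _ (by omega) (by omega), Nat.mod_eq_of_lt hlt]
        exact ⟨u.2, rfl⟩
  · -- injectivity
    intro u hu v hv huv
    rw [SetLike.mem_coe, Submodule.mem_prod] at hu hv
    have ha : P 0 u.1 = u.1 := (hmemP 0 u.1).1 hu.1
    have hc : P 0 v.1 = v.1 := (hmemP 0 v.1).1 hv.1
    have key : ∀ l : Fin (k + 1), (if (l : ℕ) = 0 then (Pr 0 u).1 else (Pr (l : ℕ) u).2)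
        = (if (l : ℕ) = 0 then (Pr 0 v).1 else (Pr (l : ℕ) v).2) := by
      intro l
      rw [← he, ← he]
      exact congrFun huv l
    have h1 : u.1 = v.1 := by
      have := key ⟨0, by omega⟩
      rw [if_pos rfl, if_pos rfl, hPr0, hPr0] at this
      rwa [ha, hc] at this
    have h0 : P 0 u.2 = P 0 v.2 := by
      have := key ⟨k, by omega⟩
      rw [if_neg (by simpa using hk.ne' : ¬ ((⟨k, by omega⟩ : Fin (k+1)) : ℕ) = 0)] at this
      rw [if_neg (by simpa using hk.ne' : ¬ ((⟨k, by omega⟩ : Fin (k+1)) : ℕ) = 0)] at this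
      simp only [hPrk] at this
      have h2 : P 0 u.2 - P 0 u.1 = P 0 v.2 - P 0 v.1 := this
      rw [h1] at h2
      linear_combination (norm := module) h2
    have hP2 : ∀ m ∈ Finset.range k, P m u.2 = P m v.2 := by
      intro m hm
      have hmk : m < k := Finset.mem_range.mp hm
      rcases Nat.eq_zero_or_pos m with rfl | hm1
      · exact h0
      · have := key ⟨m, by omega⟩
        rw [if_neg (by simpa using by omega : ¬ ((⟨m, by omega⟩ : Fin (k+1)) : ℕ) = 0)] at this
        rw [if_neg (by simpa using by omega : ¬ ((⟨m, by omega⟩ : Fin (k+1)) : ℕ) = 0)] at this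
        simp only [hPrmid m hm1 (by omega : m ≤ k - 1)] at this
        exact this
    have h2 : u.2 = v.2 := by
      rw [← hsum u.2, ← hsum v.2]
      exact Finset.sum_congr rfl hP2
    exact Prod.ext h1 h2
  · -- surjectivity
    intro z hz
    have hz' : ∀ l : Fin (k + 1), P ((l : ℕ) % k) (z l) = z l := fun l => (hmemP _ _).1 (hz l)
    have hz0 : P 0 (z ⟨0, by omega⟩) = z ⟨0, by omega⟩ := by
      have := hz' ⟨0, by omega⟩
      simpa using this
    have hzk : P 0 (z ⟨k, by omega⟩) = z ⟨k, by omega⟩ := by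
      have := hz' ⟨k, by omega⟩
      simpa [Nat.mod_self] using this
    refine ⟨(z ⟨0, by omega⟩, ∑ l : Fin (k + 1), z l), Submodule.mem_prod.mpr
      ⟨⟨z ⟨0, by omega⟩, hz0⟩, trivial⟩, ?_⟩
    have hPsum : ∀ m, m < k → P m (∑ l : Fin (k + 1), z l)
        = ∑ l : Fin (k + 1), (if (l : ℕ) % k = m then z l else 0) := by
      intro m hm
      rw [map_sum]
      refine Finset.sum_congr rfl fun l _ => ?_
      by_cases h : (l : ℕ) % k = m
      · rw [if_pos h, ← h]
        exact hz' l
      · rw [if_neg h]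
        exact hkill m _ (fun h' => h h'.symm) _ (hz l)
    have hPmid : ∀ m (hm1 : 1 ≤ m) (hm : m < k), P m (∑ l : Fin (k + 1), z l)
        = z ⟨m, by omega⟩ := by
      intro m hm1 hm
      rw [hPsum m hm]
      rw [Finset.sum_eq_single (⟨m, by omega⟩ : Fin (k + 1))]
      · rw [if_pos (by simp [Nat.mod_eq_of_lt hm])]
      · intro l _ hl
        refine if_neg fun h => hl ?_
        rcases Nat.lt_or_ge (l : ℕ) k with h1 | h1
        · rw [Nat.mod_eq_of_lt h1] at h
          exact Fin.ext h
        · have hlk : (l : ℕ) = k := by have := l.isLt; omega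
          rw [hlk, Nat.mod_self] at h
          omega
      · intro h
        exact absurd (Finset.mem_univ _) h
    have hP0sum : P 0 (∑ l : Fin (k + 1), z l) = z ⟨0, by omega⟩ + z ⟨k, by omega⟩ := by
      rw [hPsum 0 hk, Fin.sum_univ_castSucc]
      have h1 : ∀ l : Fin k, (if ((l.castSucc : Fin (k+1)) : ℕ) % k = 0 then z l.castSucc else 0)
          = if l = ⟨0, hk⟩ then z l.castSucc else 0 := by
        intro l
        have hc : ((l.castSucc : Fin (k+1)) : ℕ) = (l : ℕ) := rfl
        rw [hc, Nat.mod_eq_of_lt l.isLt]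
        by_cases h : l = (⟨0, hk⟩ : Fin k)
        · rw [if_pos h, if_pos (by rw [h] : (l : ℕ) = 0)]
        · rw [if_neg h, if_neg (fun hh => h (Fin.ext hh))]
      simp only [h1]
      rw [Finset.sum_ite_eq' Finset.univ (⟨0, hk⟩ : Fin k)]
      rw [if_pos (Finset.mem_univ _),
        if_pos (by simp [Nat.mod_self] : ((Fin.last k : Fin (k+1)) : ℕ) % k = 0)]
      congr 1
    funext l
    rw [he]
    by_cases hl0 : (l : ℕ) = 0
    · rw [if_pos hl0, hPr0]
      show P 0 (z ⟨0, by omega⟩) = z l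
      rw [hz0]
      congr 1
      exact (Fin.ext hl0).symm
    · rw [if_neg hl0]
      by_cases hlk : (l : ℕ) = k
      · rw [hlk, hPrk]
        show P 0 (∑ l : Fin (k + 1), z l) - P 0 (z ⟨0, by omega⟩) = z l
        rw [hP0sum, hz0]
        have : l = ⟨k, by omega⟩ := Fin.ext hlk
        rw [this]
        abel
      · have hlt : (l : ℕ) < k := by have := l.isLt; omega
        rw [hPrmid _ (by omega) (by omega)]
        show P (l : ℕ) (∑ l : Fin (k + 1), z l) = z l
        rw [hPmid _ (by omega) hlt]
  · -- bracket homomorphism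
    intro u v hu hv
    rw [Submodule.mem_prod] at hu hv
    have ha : P 0 u.1 = u.1 := (hmemP 0 u.1).1 hu.1
    have hc : P 0 v.1 = v.1 := (hmemP 0 v.1).1 hv.1
    set f : ℕ → L := fun i => if i = 0 then u.1 else if i < k then P i u.2 else P 0 u.2 - u.1
      with hfdef
    set g : ℕ → L := fun i => if i = 0 then v.1 else if i < k then P i v.2 else P 0 v.2 - v.1
      with hgdef
    have hf0 : f 0 = u.1 := by simp [hfdef]
    have hg0 : g 0 = v.1 := by simp [hgdef]
    have hfm : ∀ i, 1 ≤ i → i < k → f i = P i u.2 := by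
      intro i h1 h2
      simp only [hfdef]
      rw [if_neg (by omega), if_pos h2]
    have hgm : ∀ i, 1 ≤ i → i < k → g i = P i v.2 := by
      intro i h1 h2
      simp only [hgdef]
      rw [if_neg (by omega), if_pos h2]
    have hfk : f k = P 0 u.2 - u.1 := by
      simp only [hfdef]
      rw [if_neg (by omega), if_neg (by omega)]
    have hgk : g k = P 0 v.2 - v.1 := by
      simp only [hgdef]
      rw [if_neg (by omega), if_neg (by omega)]
    have hfP : ∀ i ≤ k, P (i % k) (f i) = f i := by
      intro i hi
      by_cases h0 : i = 0
      · rw [h0, Nat.zero_mod, hf0]; exact ha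
      · rcases eq_or_lt_of_le hi with h | h
        · rw [h, Nat.mod_self, hfk, map_sub, hproj 0 u.2, ha]
        · rw [Nat.mod_eq_of_lt h, hfm i (by omega) h]
          exact hproj i u.2
    have hgP : ∀ i ≤ k, P (i % k) (g i) = g i := by
      intro i hi
      by_cases h0 : i = 0
      · rw [h0, Nat.zero_mod, hg0]; exact hc
      · rcases eq_or_lt_of_le hi with h | h
        · rw [h, Nat.mod_self, hgk, map_sub, hproj 0 v.2, hc]
        · rw [Nat.mod_eq_of_lt h, hgm i (by omega) h]
          exact hproj i v.2
    have hPbr2 : ∀ i j m : ℕ, i ≤ k → j ≤ k → m < k →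
        P m ⁅f i, g j⁆ = if (i + j) % k = m then ⁅f i, g j⁆ else 0 := by
      intro i j m hi hj hm
      have h1 := hfP i hi
      have h2 := hgP j hj
      by_cases h : (i + j) % k = m
      · rw [if_pos h, ← h]
        have h3 := hbrP (i % k) (j % k) (Nat.mod_lt _ hk) (Nat.mod_lt _ hk) (f i) (g j) h1 h2
        rwa [← Nat.add_mod] at h3
      · rw [if_neg h]
        refine hbrP0 (i % k) (j % k) m (Nat.mod_lt _ hk) (Nat.mod_lt _ hk) ?_ (f i) (g j) h1 h2
        rw [← Nat.add_mod]
        omega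
    have hPru : ∀ i ≤ k, Pr i u = ((if i = 0 then u.1 else 0), f i) := by
      intro i hi
      by_cases h0 : i = 0
      · rw [h0, hPr0, if_pos rfl, hf0, ha]
      · rcases eq_or_lt_of_le hi with h | h
        · rw [h, hPrk, if_neg (by omega), hfk, ha]
        · rw [hPrmid i (by omega) (by omega), if_neg h0, hfm i (by omega) h]
    have hPrv : ∀ i ≤ k, Pr i v = ((if i = 0 then v.1 else 0), g i) := by
      intro i hi
      by_cases h0 : i = 0
      · rw [h0, hPr0, if_pos rfl, hg0, hc]
      · rcases eq_or_lt_of_le hi with h | h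
        · rw [h, hPrk, if_neg (by omega), hgk, hc]
        · rw [hPrmid i (by omega) (by omega), if_neg h0, hgm i (by omega) h]
    have hsingle : ∀ (F : ℕ → ℕ → L), (∀ i j, ¬(i = 0 ∧ j = 0) → F i j = 0) →
        (∑ i ∈ Finset.range (k + 1), ∑ j ∈ Finset.range (k + 1), F i j) = F 0 0 := by
      intro F hF
      rw [Finset.sum_eq_single 0]
      · rw [Finset.sum_eq_single 0]
        · intro j _ hj
          exact hF 0 j (fun hh => hj hh.2)
        · intro h; exact absurd (Finset.mem_range.mpr (by omega)) h
      · intro i _ hi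
        exact Finset.sum_eq_zero fun j _ => hF i j (fun hh => hi hh.1)
      · intro h; exact absurd (Finset.mem_range.mpr (by omega)) h
    have hBfull : BΓ u v = (⁅u.1, v.1⁆,
        ∑ i ∈ Finset.range (k + 1), ∑ j ∈ Finset.range (k + 1),
          if i + j ≤ k then ⁅f i, g j⁆ else 0) := by
      rw [hBΓ]
      have hre : ∀ i ∈ Finset.range (k + 1), ∀ j ∈ Finset.range (k + 1),
          (if i + j ≤ k then prodBracket (Pr i u) (Pr j v) else 0)
          = ((if i + j ≤ k then (if i = 0 ∧ j = 0 then ⁅u.1, v.1⁆ else 0) else 0),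
             (if i + j ≤ k then ⁅f i, g j⁆ else 0)) := by
        intro i hi j hj
        have hik : i ≤ k := by have := Finset.mem_range.mp hi; omega
        have hjk : j ≤ k := by have := Finset.mem_range.mp hj; omega
        have hpb : prodBracket (Pr i u) (Pr j v)
            = ((if i = 0 ∧ j = 0 then ⁅u.1, v.1⁆ else 0), ⁅f i, g j⁆) := by
          rw [hPru i hik, hPrv j hjk]
          simp only [prodBracket]
          refine Prod.ext ?_ rfl
          by_cases h1 : i = 0 <;> by_cases h2 : j = 0 <;> simp [h1, h2]
        by_cases h : i + j ≤ k
        · rw [if_pos h, if_pos h, if_pos h, hpb]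
        · rw [if_neg h, if_neg h, if_neg h]
          rfl
      rw [Finset.sum_congr rfl fun i hi => Finset.sum_congr rfl fun j hj => hre i hi j hj]
      refine Prod.ext ?_ ?_
      · rw [Prod.fst_sum]
        simp only [Prod.fst_sum]
        refine (hsingle _ fun i j hij => ?_).trans (by simp)
        by_cases h : i + j ≤ k
        · rw [if_pos h, if_neg hij]
        · rw [if_neg h]
      · rw [Prod.snd_sum]
        simp only [Prod.snd_sum]
    have hfe : ∀ i : Fin (k + 1), e u i = f (i : ℕ) := by
      intro i
      rw [he]
      by_cases h0 : (i : ℕ) = 0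
      · rw [if_pos h0, hPr0, h0, hf0, ha]
      · rw [if_neg h0, hPru (i : ℕ) (Nat.lt_succ_iff.mp i.isLt)]
    have hge : ∀ i : Fin (k + 1), e v i = g (i : ℕ) := by
      intro i
      rw [he]
      by_cases h0 : (i : ℕ) = 0
      · rw [if_pos h0, hPr0, h0, hg0, hc]
      · rw [if_neg h0, hPrv (i : ℕ) (Nat.lt_succ_iff.mp i.isLt)]
    have hRHS : ∀ l : Fin (k + 1), takiffBracket (k + 1) (e u) (e v) l
        = ∑ i ∈ Finset.range (k + 1), ∑ j ∈ Finset.range (k + 1),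
          if i + j = (l : ℕ) then ⁅f i, g j⁆ else 0 := by
      intro l
      show (∑ i : Fin (k + 1), ∑ j : Fin (k + 1),
        if (i : ℕ) + (j : ℕ) = (l : ℕ) then ⁅e u i, e v j⁆ else 0) = _
      have h1 : ∀ i : Fin (k + 1),
          (∑ j : Fin (k + 1), if (i : ℕ) + (j : ℕ) = (l : ℕ) then ⁅e u i, e v j⁆ else 0)
          = ∑ j ∈ Finset.range (k + 1), (if (i : ℕ) + j = (l : ℕ) then ⁅f (i : ℕ), g j⁆ else 0) := by
        intro i
        rw [← Fin.sum_univ_eq_sum_range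
          (fun j => if (i : ℕ) + j = (l : ℕ) then ⁅f (i : ℕ), g j⁆ else 0) (k + 1)]
        refine Finset.sum_congr rfl fun j _ => ?_
        rw [hfe i, hge j]
      simp only [h1]
      exact Fin.sum_univ_eq_sum_range
        (fun i => ∑ j ∈ Finset.range (k + 1), if i + j = (l : ℕ) then ⁅f i, g j⁆ else 0) (k + 1)
    have hP0uv : P 0 ⁅u.1, v.1⁆ = ⁅u.1, v.1⁆ := by
      have := hbrP 0 0 hk hk u.1 v.1 ha hc
      simpa using this
    funext l
    rw [hRHS l, he, hBfull]
    by_cases hl0 : (l : ℕ) = 0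
    · rw [if_pos hl0, hPr0, hl0]
      show P 0 ⁅u.1, v.1⁆ = _
      rw [hP0uv]
      refine Eq.symm ((hsingle _ fun i j hij => if_neg (fun hh => hij ⟨by omega, by omega⟩)).trans ?_)
      simp [hf0, hg0]
    · rw [if_neg hl0]
      by_cases hlk : (l : ℕ) = k
      · rw [hlk, hPrk]
        show P 0 (∑ i ∈ Finset.range (k + 1), ∑ j ∈ Finset.range (k + 1),
            if i + j ≤ k then ⁅f i, g j⁆ else 0) - P 0 ⁅u.1, v.1⁆ = _
        have hsplit : P 0 (∑ i ∈ Finset.range (k + 1), ∑ j ∈ Finset.range (k + 1),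
            if i + j ≤ k then ⁅f i, g j⁆ else 0)
            = ∑ i ∈ Finset.range (k + 1), ∑ j ∈ Finset.range (k + 1),
              ((if i + j = 0 then ⁅f i, g j⁆ else 0) + (if i + j = k then ⁅f i, g j⁆ else 0)) := by
          rw [map_sum]
          refine Finset.sum_congr rfl fun i hi => ?_
          rw [map_sum]
          refine Finset.sum_congr rfl fun j hj => ?_
          have hik : i ≤ k := by have := Finset.mem_range.mp hi; omega
          have hjk : j ≤ k := by have := Finset.mem_range.mp hj; omega
          by_cases h : i + j ≤ k
          · rw [if_pos h, hPbr2 i j 0 hik hjk hk]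
            by_cases h0 : i + j = 0
            · rw [if_pos (by rw [h0]; exact Nat.zero_mod k), if_pos h0, if_neg (by omega),
                add_zero]
            · by_cases hK : i + j = k
              · rw [if_pos (by rw [hK]; exact Nat.mod_self k), if_neg h0, if_pos hK, zero_add]
              · rw [if_neg (by rw [Nat.mod_eq_of_lt (by omega)]; omega), if_neg h0, if_neg hK,
                  add_zero]
          · rw [if_neg h, map_zero, if_neg (by omega), if_neg (by omega), add_zero]
        rw [hsplit, hP0uv]
        simp only [Finset.sum_add_distrib]
        have h00 : (∑ i ∈ Finset.range (k + 1), ∑ j ∈ Finset.range (k + 1),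
            if i + j = 0 then ⁅f i, g j⁆ else 0) = ⁅u.1, v.1⁆ := by
          refine (hsingle _ fun i j hij => if_neg (fun hh => hij ⟨by omega, by omega⟩)).trans ?_
          simp [hf0, hg0]
        rw [h00, add_sub_cancel_left]
      · have hlt : (l : ℕ) < k := by have := l.isLt; omega
        rw [hPrmid _ (by omega) (by omega)]
        show P (l : ℕ) (∑ i ∈ Finset.range (k + 1), ∑ j ∈ Finset.range (k + 1),
            if i + j ≤ k then ⁅f i, g j⁆ else 0) = _
        rw [map_sum]
        refine Finset.sum_congr rfl fun i hi => ?_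
        rw [map_sum]
        refine Finset.sum_congr rfl fun j hj => ?_
        have hik : i ≤ k := by have := Finset.mem_range.mp hi; omega
        have hjk : j ≤ k := by have := Finset.mem_range.mp hj; omega
        by_cases h : i + j ≤ k
        · rw [if_pos h, hPbr2 i j (l : ℕ) hik hjk hlt]
          rcases Nat.lt_or_ge (i + j) k with h1 | h1
          · rw [Nat.mod_eq_of_lt h1]
          · have h2 : i + j = k := by omega
            rw [h2, Nat.mod_self, if_neg (by omega), if_neg (by omega)]
        · rw [if_neg h, map_zero, if_neg (by omega)]
end

section
/- For F in the Poisson center of S(q), the component gr^•F of F of maximal Γ-degree lies in the Poisson center of S(C_Γ(q)); likewise, for F ∈ k[q]^q, the component gr_•F of minimal Γ-degree is an invariant of the adjoint representation of C_Γ(q). -/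
open Finset Module MvPolynomial

section Defs

variable {𝕜 L ι : Type*} [Field 𝕜] [LieRing L] [LieAlgebra 𝕜 L]
  [Fintype ι] [DecidableEq ι]

/-- The Poisson bracket on `S(q)`, realised on `MvPolynomial ι 𝕜` via a basis `b` of `q`:
`{F, G} = ∑_{i,j} ∂F/∂Xᵢ · ∂G/∂Xⱼ · ([bᵢ, bⱼ] written in coordinates)`. -/
noncomputable def poissonBracket (b : Basis ι 𝕜 L) (F G : MvPolynomial ι 𝕜) :
    MvPolynomial ι 𝕜 :=
  ∑ i : ι, ∑ j : ι, pderiv i F * pderiv j G *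
    ∑ l : ι, C (b.repr ⁅b i, b j⁆ l) * X l

/-- The Poisson bracket of the quasi-graded contraction `C_Γ(q)`: the structure constants
are those of `q` when `deg i + deg j ≤ k − 1` and `0` otherwise. -/
noncomputable def contractedPoissonBracket (b : Basis ι 𝕜 L) (deg : ι → ℕ) (k : ℕ)
    (F G : MvPolynomial ι 𝕜) : MvPolynomial ι 𝕜 :=
  ∑ i : ι, ∑ j : ι, pderiv i F * pderiv j G *
    (if deg i + deg j ≤ k - 1 then ∑ l : ι, C (b.repr ⁅b i, b j⁆ l) * X l else 0)

/-- The adjoint action of the basis vector `bᵢ ∈ q` on `𝕜[q]` (realised on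
`MvPolynomial ι 𝕜` via the structure constants of `q`). -/
noncomputable def adAction (b : Basis ι 𝕜 L) (i : ι) (F : MvPolynomial ι 𝕜) :
    MvPolynomial ι 𝕜 :=
  ∑ l : ι, pderiv l F * ∑ j : ι, C (b.repr ⁅b i, b j⁆ l) * X j

/-- The adjoint action of the basis vector `bᵢ` for the contracted Lie algebra
`C_Γ(q)` on `𝕜[C_Γ(q)]`. -/
noncomputable def contractedAdAction (b : Basis ι 𝕜 L) (deg : ι → ℕ) (k : ℕ) (i : ι)
    (F : MvPolynomial ι 𝕜) : MvPolynomial ι 𝕜 :=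
  ∑ l : ι, pderiv l F *
    ∑ j : ι, C (if deg i + deg j ≤ k - 1 then b.repr ⁅b i, b j⁆ l else 0) * X j

end Defs

set_option linter.unusedSectionVars false
set_option maxHeartbeats 1000000

section AuxPD

variable {𝕜 ι : Type*} [Field 𝕜] [Fintype ι] [DecidableEq ι]

private lemma weight_single_one' (deg : ι → ℕ) (i : ι) :
    (Finsupp.weight deg) (Finsupp.single i 1) = deg i := by
  simp [Finsupp.weight_apply, Finsupp.sum_single_index]

private lemma pderiv_ne_zero_deg_le' {deg : ι → ℕ} {P : MvPolynomial ι 𝕜} {n : ℕ}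
    (hP : IsWeightedHomogeneous deg P n) {i : ι} (h : pderiv i P ≠ 0) : deg i ≤ n := by
  by_contra hlt
  push_neg at hlt
  apply h
  conv_lhs => rw [P.as_sum]
  rw [map_sum]
  refine Finset.sum_eq_zero fun d hd => ?_
  rw [pderiv_monomial]
  have hd0 : d i = 0 := by
    by_contra hne
    have h1 := Finsupp.le_weight_of_ne_zero' deg hne
    rw [hP (mem_support_iff.mp hd)] at h1
    omega
  simp [hd0]

private lemma pderiv_isWeightedHomogeneous' {deg : ι → ℕ} {P : MvPolynomial ι 𝕜} {n : ℕ}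
    (hP : IsWeightedHomogeneous deg P n) (i : ι) :
    IsWeightedHomogeneous deg (pderiv i P) (n - deg i) := by
  have hrw : pderiv i P
      = ∑ d ∈ P.support, monomial (d - Finsupp.single i 1) (coeff d P * (d i : 𝕜)) := by
    conv_lhs => rw [P.as_sum]
    rw [map_sum]
    exact Finset.sum_congr rfl fun d _ => pderiv_monomial
  rw [hrw]
  apply IsWeightedHomogeneous.sum
  intro d hd
  by_cases hd0 : d i = 0
  · rw [hd0]
    simpa using isWeightedHomogeneous_zero 𝕜 deg (n - deg i)
  · apply isWeightedHomogeneous_monomial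
    have hw : Finsupp.weight deg d = n := hP (mem_support_iff.mp hd)
    have hsub : (d - Finsupp.single i 1) + Finsupp.single i 1 = d := by
      ext a
      by_cases ha : a = i
      · subst ha
        simp [Finsupp.sub_apply, Finsupp.single_apply]
        omega
      · simp [Finsupp.sub_apply, Finsupp.single_apply, ha, Ne.symm ha]
    have h2 := congrArg (Finsupp.weight deg) hsub
    rw [map_add, weight_single_one', hw] at h2
    have hle : deg i ≤ n := by
      have h3 := Finsupp.le_weight_of_ne_zero' deg hd0
      rwa [hw] at h3
    omega

private lemma atom_homog' {deg : ι → ℕ} {P : MvPolynomial ι 𝕜} {n : ℕ}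
    (hP : IsWeightedHomogeneous deg P n) (i l : ι) (a : 𝕜) :
    IsWeightedHomogeneous deg (pderiv i P * (C a * X l)) (n - deg i + deg l) := by
  have h1 := pderiv_isWeightedHomogeneous' hP i
  have h2 : IsWeightedHomogeneous deg ((C a : MvPolynomial ι 𝕜) * X l) (deg l) := by
    simpa using (isWeightedHomogeneous_C deg a).mul (isWeightedHomogeneous_X 𝕜 deg l)
  exact h1.mul h2

end AuxPD


/-- Let `Γ = {q_i}_{i<k}` be a quasi-graded structure on `q`, encoded by
a basis `b` adapted to the decomposition (`b l ∈ q_{deg l}`).  If `F` lies in the Poisson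
centre of `S(q)`, then the component `gr^•F` of `F` of maximal `Γ`-degree lies in the
Poisson centre of `S(C_Γ(q))`; likewise, if `F ∈ 𝕜[q]^q` is an invariant of the adjoint
representation, then the component `gr_•F` of minimal `Γ`-degree is an invariant of the
adjoint representation of `C_Γ(q)`. -/
theorem graded_components_of_invariants_are_invariants_of_contraction
    {𝕜 L ι : Type*} [Field 𝕜] [CharZero 𝕜] [LieRing L] [LieAlgebra 𝕜 L]
    [FiniteDimensional 𝕜 L] [Fintype ι] [DecidableEq ι]
    (b : Basis ι 𝕜 L) (k : ℕ) (hk : 0 < k)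
    (deg : ι → ℕ) (hdeg : ∀ i, deg i < k)
    -- the quasi-grading condition `[q_i, q_j] ⊆ q_{i+j}` for `i + j ≤ k − 1`
    (hgrade : ∀ i j : ι, deg i + deg j ≤ k - 1 →
      ∀ l : ι, b.repr ⁅b i, b j⁆ l ≠ 0 → deg l = deg i + deg j)
    (F : MvPolynomial ι 𝕜) :
    -- (i) Poisson centre and components of maximal Γ-degree
    ((∀ G : MvPolynomial ι 𝕜, poissonBracket b F G = 0) →
      ∀ G : MvPolynomial ι 𝕜, contractedPoissonBracket b deg k
        (weightedHomogeneousComponent deg (weightedTotalDegree deg F) F) G = 0) ∧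
    -- (ii) adjoint invariants and components of minimal Γ-degree
    ((∀ i : ι, adAction b i F = 0) →
      ∀ i : ι, contractedAdAction b deg k i
        (weightedHomogeneousComponent deg
          (sInf {n : ℕ | weightedHomogeneousComponent deg n F ≠ 0}) F) = 0) := by
  classical
  have hdecomp : ∀ d : ℕ, weightedTotalDegree deg F ≤ d →
      F = ∑ n ∈ Finset.range (d + 1), weightedHomogeneousComponent deg n F := by
    intro d hd
    conv_lhs => rw [← sum_weightedHomogeneousComponent deg F]
    apply finsum_eq_sum_of_support_subset
    intro n hn
    simp only [Function.mem_support] at hn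
    have h1 : ¬ weightedTotalDegree deg F < n :=
      fun h => hn (weightedHomogeneousComponent_eq_zero n F h)
    simp only [Finset.coe_range, Set.mem_Iio]
    omega
  constructor
  · -- part (i)
    intro hPB G
    set d := weightedTotalDegree deg F with hdd
    have hFd : IsWeightedHomogeneous deg (weightedHomogeneousComponent deg d F) d :=
      weightedHomogeneousComponent_isWeightedHomogeneous d F
    have hdec := hdecomp d le_rfl
    have hDj : ∀ j : ι,
        (∑ i : ι, pderiv i F * ∑ l : ι, C ((b.repr ⁅b i, b j⁆) l) * X l)
          = (0 : MvPolynomial ι 𝕜) := by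
      intro j
      have h := hPB (X j)
      unfold poissonBracket at h
      have collapse : ∀ i : ι,
          (∑ j' : ι, pderiv i F * pderiv j' (X j : MvPolynomial ι 𝕜) *
            ∑ l : ι, C ((b.repr ⁅b i, b j'⁆) l) * X l)
          = pderiv i F * ∑ l : ι, C ((b.repr ⁅b i, b j⁆) l) * X l := by
        intro i
        rw [Finset.sum_eq_single j]
        · rw [pderiv_X_self, mul_one]
        · intro j' _ hne
          rw [pderiv_X_of_ne (Ne.symm hne), mul_zero, zero_mul]
        · intro hj; exact absurd (Finset.mem_univ j) hj
      calc (∑ i : ι, pderiv i F * ∑ l : ι, C ((b.repr ⁅b i, b j⁆) l) * X l)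
          = ∑ i : ι, ∑ j' : ι, pderiv i F * pderiv j' (X j : MvPolynomial ι 𝕜) *
              ∑ l : ι, C ((b.repr ⁅b i, b j'⁆) l) * X l :=
            Finset.sum_congr rfl fun i _ => (collapse i).symm
        _ = 0 := h
    have expand : ∀ (i j : ι), pderiv i F * (∑ l : ι, C ((b.repr ⁅b i, b j⁆) l) * X l)
        = ∑ l : ι, ∑ n ∈ Finset.range (d + 1),
            pderiv i (weightedHomogeneousComponent deg n F) *
              (C ((b.repr ⁅b i, b j⁆) l) * X l) := by
      intro i j
      rw [Finset.mul_sum]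
      refine Finset.sum_congr rfl fun l _ => ?_
      conv_lhs => rw [hdec]
      rw [map_sum, Finset.sum_mul]
    unfold contractedPoissonBracket
    rw [Finset.sum_comm]
    refine Finset.sum_eq_zero fun j _ => ?_
    have core : (∑ i : ι, pderiv i (weightedHomogeneousComponent deg d F) *
        (if deg i + deg j ≤ k - 1 then
          ∑ l : ι, C ((b.repr ⁅b i, b j⁆) l) * X l else 0)) = 0 := by
      have step : (∑ i : ι, pderiv i (weightedHomogeneousComponent deg d F) *
          (if deg i + deg j ≤ k - 1 then
            ∑ l : ι, C ((b.repr ⁅b i, b j⁆) l) * X l else 0))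
          = weightedHomogeneousComponent deg (d + deg j)
              (∑ i : ι, pderiv i F * ∑ l : ι, C ((b.repr ⁅b i, b j⁆) l) * X l) := by
        rw [map_sum]
        refine Finset.sum_congr rfl fun i _ => ?_
        rw [expand i j]
        simp only [map_sum]
        by_cases hcond : deg i + deg j ≤ k - 1
        · rw [if_pos hcond, Finset.mul_sum]
          refine Finset.sum_congr rfl fun l _ => ?_
          have hothers : ∀ n ∈ Finset.range (d + 1), n ≠ d →
              weightedHomogeneousComponent deg (d + deg j)
                (pderiv i (weightedHomogeneousComponent deg n F) *
                  (C ((b.repr ⁅b i, b j⁆) l) * X l)) = 0 := by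
            intro n hn hne
            by_cases hz : pderiv i (weightedHomogeneousComponent deg n F) *
                (C ((b.repr ⁅b i, b j⁆) l) * X l) = 0
            · rw [hz, map_zero]
            · have hpd : pderiv i (weightedHomogeneousComponent deg n F) ≠ 0 :=
                fun h0 => hz (by rw [h0, zero_mul])
              have ha : (b.repr ⁅b i, b j⁆) l ≠ 0 :=
                fun h0 => hz (by rw [h0, map_zero, zero_mul, mul_zero])
              have hin : deg i ≤ n := pderiv_ne_zero_deg_le'
                (weightedHomogeneousComponent_isWeightedHomogeneous n F) hpd
              have hdl : deg l = deg i + deg j := hgrade i j hcond l ha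
              apply IsWeightedHomogeneous.weightedHomogeneousComponent_ne _
                (atom_homog' (weightedHomogeneousComponent_isWeightedHomogeneous n F) i l _)
              omega
          rw [Finset.sum_eq_single_of_mem d (Finset.self_mem_range_succ d) hothers]
          symm
          by_cases hz : pderiv i (weightedHomogeneousComponent deg d F) *
              (C ((b.repr ⁅b i, b j⁆) l) * X l) = 0
          · rw [hz, map_zero]
          · have hpd : pderiv i (weightedHomogeneousComponent deg d F) ≠ 0 :=
              fun h0 => hz (by rw [h0, zero_mul])
            have ha : (b.repr ⁅b i, b j⁆) l ≠ 0 :=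
              fun h0 => hz (by rw [h0, map_zero, zero_mul, mul_zero])
            have hin : deg i ≤ d := pderiv_ne_zero_deg_le' hFd hpd
            have hdl : deg l = deg i + deg j := hgrade i j hcond l ha
            have heq : d - deg i + deg l = d + deg j := by omega
            rw [← heq]
            exact IsWeightedHomogeneous.weightedHomogeneousComponent_same
              (atom_homog' hFd i l _)
        · rw [if_neg hcond, mul_zero]
          symm
          refine Finset.sum_eq_zero fun l _ => ?_
          refine Finset.sum_eq_zero fun n hn => ?_
          by_cases hz : pderiv i (weightedHomogeneousComponent deg n F) *
              (C ((b.repr ⁅b i, b j⁆) l) * X l) = 0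
          · rw [hz, map_zero]
          · have hpd : pderiv i (weightedHomogeneousComponent deg n F) ≠ 0 :=
              fun h0 => hz (by rw [h0, zero_mul])
            have hin : deg i ≤ n := pderiv_ne_zero_deg_le'
              (weightedHomogeneousComponent_isWeightedHomogeneous n F) hpd
            have hnd : n ≤ d := Nat.lt_succ_iff.mp (Finset.mem_range.mp hn)
            have hlk : deg l < k := hdeg l
            apply IsWeightedHomogeneous.weightedHomogeneousComponent_ne _
              (atom_homog' (weightedHomogeneousComponent_isWeightedHomogeneous n F) i l _)
            omega
      rw [step, hDj j, map_zero]
    calc (∑ i : ι, pderiv i (weightedHomogeneousComponent deg d F) * pderiv j G *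
        (if deg i + deg j ≤ k - 1 then
          ∑ l : ι, C ((b.repr ⁅b i, b j⁆) l) * X l else 0))
        = pderiv j G * ∑ i : ι, pderiv i (weightedHomogeneousComponent deg d F) *
            (if deg i + deg j ≤ k - 1 then
              ∑ l : ι, C ((b.repr ⁅b i, b j⁆) l) * X l else 0) := by
          rw [Finset.mul_sum]
          exact Finset.sum_congr rfl fun i _ => by ring
      _ = 0 := by rw [core, mul_zero]
  · -- part (ii)
    intro hAd i
    set m := sInf {n : ℕ | weightedHomogeneousComponent deg n F ≠ 0} with hmdef
    by_cases hFm : weightedHomogeneousComponent deg m F = 0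
    · unfold contractedAdAction
      rw [hFm]
      simp
    · have hFmh : IsWeightedHomogeneous deg (weightedHomogeneousComponent deg m F) m :=
        weightedHomogeneousComponent_isWeightedHomogeneous m F
      set d := weightedTotalDegree deg F with hdd
      have hmd : m ≤ d := by
        by_contra h
        push_neg at h
        exact hFm (weightedHomogeneousComponent_eq_zero m F h)
      have hmin : ∀ n : ℕ, weightedHomogeneousComponent deg n F ≠ 0 → m ≤ n :=
        fun n hn => Nat.sInf_le hn
      have hdec := hdecomp d le_rfl
      have hAd' := hAd i
      unfold adAction at hAd'
      by_cases him : deg i ≤ m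
      · unfold contractedAdAction
        have expand : ∀ l : ι, pderiv l F * (∑ j : ι, C ((b.repr ⁅b i, b j⁆) l) * X j)
            = ∑ j : ι, ∑ n ∈ Finset.range (d + 1),
                pderiv l (weightedHomogeneousComponent deg n F) *
                  (C ((b.repr ⁅b i, b j⁆) l) * X j) := by
          intro l
          rw [Finset.mul_sum]
          refine Finset.sum_congr rfl fun j _ => ?_
          conv_lhs => rw [hdec]
          rw [map_sum, Finset.sum_mul]
        have step : (∑ l : ι, pderiv l (weightedHomogeneousComponent deg m F) *
              ∑ j : ι, C (if deg i + deg j ≤ k - 1 then (b.repr ⁅b i, b j⁆) l else 0) * X j)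
            = weightedHomogeneousComponent deg (m - deg i)
                (∑ l : ι, pderiv l F * ∑ j : ι, C ((b.repr ⁅b i, b j⁆) l) * X j) := by
          rw [map_sum]
          refine Finset.sum_congr rfl fun l _ => ?_
          rw [expand l]
          simp only [map_sum]
          rw [Finset.mul_sum]
          refine Finset.sum_congr rfl fun j _ => ?_
          by_cases hcond : deg i + deg j ≤ k - 1
          · rw [if_pos hcond]
            have hothers : ∀ n ∈ Finset.range (d + 1), n ≠ m →
                weightedHomogeneousComponent deg (m - deg i)
                  (pderiv l (weightedHomogeneousComponent deg n F) *
                    (C ((b.repr ⁅b i, b j⁆) l) * X j)) = 0 := by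
              intro n hn hne
              by_cases hz : pderiv l (weightedHomogeneousComponent deg n F) *
                  (C ((b.repr ⁅b i, b j⁆) l) * X j) = 0
              · rw [hz, map_zero]
              · have hpd : pderiv l (weightedHomogeneousComponent deg n F) ≠ 0 :=
                  fun h0 => hz (by rw [h0, zero_mul])
                have ha : (b.repr ⁅b i, b j⁆) l ≠ 0 :=
                  fun h0 => hz (by rw [h0, map_zero, zero_mul, mul_zero])
                have hln : deg l ≤ n := pderiv_ne_zero_deg_le'
                  (weightedHomogeneousComponent_isWeightedHomogeneous n F) hpd
                have hdl : deg l = deg i + deg j := hgrade i j hcond l ha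
                apply IsWeightedHomogeneous.weightedHomogeneousComponent_ne _
                  (atom_homog' (weightedHomogeneousComponent_isWeightedHomogeneous n F) l j _)
                omega
            rw [Finset.sum_eq_single_of_mem m (Finset.mem_range.mpr (by omega)) hothers]
            symm
            by_cases hz : pderiv l (weightedHomogeneousComponent deg m F) *
                (C ((b.repr ⁅b i, b j⁆) l) * X j) = 0
            · rw [hz, map_zero]
            · have hpd : pderiv l (weightedHomogeneousComponent deg m F) ≠ 0 :=
                fun h0 => hz (by rw [h0, zero_mul])
              have ha : (b.repr ⁅b i, b j⁆) l ≠ 0 :=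
                fun h0 => hz (by rw [h0, map_zero, zero_mul, mul_zero])
              have hln : deg l ≤ m := pderiv_ne_zero_deg_le' hFmh hpd
              have hdl : deg l = deg i + deg j := hgrade i j hcond l ha
              have heq : m - deg l + deg j = m - deg i := by omega
              rw [← heq]
              exact IsWeightedHomogeneous.weightedHomogeneousComponent_same
                (atom_homog' hFmh l j _)
          · rw [if_neg hcond, map_zero, zero_mul, mul_zero]
            symm
            refine Finset.sum_eq_zero fun n hn => ?_
            by_cases hz : pderiv l (weightedHomogeneousComponent deg n F) *
                (C ((b.repr ⁅b i, b j⁆) l) * X j) = 0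
            · rw [hz, map_zero]
            · have hpd : pderiv l (weightedHomogeneousComponent deg n F) ≠ 0 :=
                fun h0 => hz (by rw [h0, zero_mul])
              have hln : deg l ≤ n := pderiv_ne_zero_deg_le'
                (weightedHomogeneousComponent_isWeightedHomogeneous n F) hpd
              have hFn : weightedHomogeneousComponent deg n F ≠ 0 :=
                fun h0 => hpd (by rw [h0, map_zero])
              have hmn : m ≤ n := hmin n hFn
              have hlk : deg l < k := hdeg l
              apply IsWeightedHomogeneous.weightedHomogeneousComponent_ne _
                (atom_homog' (weightedHomogeneousComponent_isWeightedHomogeneous n F) l j _)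
              omega
        rw [step, hAd', map_zero]
      · push_neg at him
        unfold contractedAdAction
        refine Finset.sum_eq_zero fun l _ => ?_
        rw [Finset.mul_sum]
        refine Finset.sum_eq_zero fun j _ => ?_
        by_cases hv : (if deg i + deg j ≤ k - 1 then (b.repr ⁅b i, b j⁆) l else 0) = 0
        · rw [hv, map_zero, zero_mul, mul_zero]
        · have hcond : deg i + deg j ≤ k - 1 := by
            by_contra h; exact hv (if_neg h)
          have hc : (b.repr ⁅b i, b j⁆) l ≠ 0 := by rwa [if_pos hcond] at hv
          have hdl := hgrade i j hcond l hc
          have hpz : pderiv l (weightedHomogeneousComponent deg m F) = 0 := by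
            by_contra h
            have := pderiv_ne_zero_deg_le' hFmh h
            omega
          rw [hpz, zero_mul]
end

section
/- Let θ ∈ Aut(q) have order k and ζ = μ^n where μ is a primitive nk-th root of unity. Define θ̃ on n·q = q ∔ … ∔ q by θ̃(a_1,…,a_n) = (a_2,…,a_n, ζ^i a_1) for (a_1,…,a_n) ∈ n(q_i). Then θ̃ is a Lie algebra automorphism of n·q of order nk, and for each j ∈ ℤ_{nk}, the μ^j-eigenspace of θ̃ equals {(x, μ^j x, …, μ^{(n−1)j} x) : x ∈ q_{j̄}}, which is isomorphic as a q_0-module to q_{j̄}, where j̄ is the image of j in ℤ_k. -/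
open Finset Module


private lemma theta_tilde_iter {𝕜 L : Type*} [Field 𝕜] [LieRing L] [LieAlgebra 𝕜 L]
    {n : ℕ} (hn : 0 < n) (θ : L ≃ₗ[𝕜] L)
    (Θ : (Fin n → L) → (Fin n → L))
    (hΘ : ∀ (a : Fin n → L) (l : Fin n), Θ a l =
      if h : (l : ℕ) + 1 < n then a ⟨(l : ℕ) + 1, h⟩ else θ (a ⟨0, hn⟩)) :
    ∀ (m : ℕ) (a : Fin n → L) (l : Fin n),
      Θ^[m] a l = (⇑θ)^[((l : ℕ) + m) / n] (a ⟨((l : ℕ) + m) % n, Nat.mod_lt _ hn⟩) := by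
  intro m
  induction m with
  | zero =>
    intro a l
    simp only [Function.iterate_zero, id_eq, Nat.add_zero]
    rw [Nat.div_eq_of_lt l.isLt, Function.iterate_zero, id_eq]
    congr 1
    exact (Fin.ext (Nat.mod_eq_of_lt l.isLt)).symm
  | succ m ih =>
    intro a l
    rw [Function.iterate_succ_apply, ih (Θ a) l]
    set r : ℕ := ((l : ℕ) + m) % n with hr
    set q : ℕ := ((l : ℕ) + m) / n with hq
    have hdm : q * n + r = (l : ℕ) + m := by
      rw [hq, hr, Nat.mul_comm]; exact Nat.div_add_mod _ _
    rw [hΘ a ⟨r, Nat.mod_lt _ hn⟩]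
    by_cases h : r + 1 < n
    · rw [dif_pos h]
      have hd : ((l : ℕ) + (m + 1)) / n = q := by
        have : (l : ℕ) + (m + 1) = (r + 1) + q * n := by omega
        rw [this, Nat.add_mul_div_right _ _ hn, Nat.div_eq_of_lt h, Nat.zero_add]
      have hm : ((l : ℕ) + (m + 1)) % n = r + 1 := by
        have : (l : ℕ) + (m + 1) = (r + 1) + q * n := by omega
        rw [this, Nat.add_mul_mod_self_right, Nat.mod_eq_of_lt h]
      have he : (⟨((l : ℕ) + (m + 1)) % n, Nat.mod_lt _ hn⟩ : Fin n) = ⟨r + 1, h⟩ :=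
        Fin.ext hm
      rw [hd, he]
    · rw [dif_neg h]
      have hrn : r + 1 = n := by
        have : r < n := Nat.mod_lt _ hn
        omega
      have hqn : (q + 1) * n = q * n + n := by ring
      have hd : ((l : ℕ) + (m + 1)) / n = q + 1 := by
        have : (l : ℕ) + (m + 1) = (q + 1) * n := by omega
        rw [this, Nat.mul_div_cancel _ hn]
      have hm : ((l : ℕ) + (m + 1)) % n = 0 := by
        have : (l : ℕ) + (m + 1) = (q + 1) * n := by omega
        rw [this, Nat.mul_mod_left]
      have he : (⟨((l : ℕ) + (m + 1)) % n, Nat.mod_lt _ hn⟩ : Fin n) = ⟨0, hn⟩ :=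
        Fin.ext hm
      rw [hd, he, ← Function.iterate_succ_apply (⇑θ) q (a ⟨0, hn⟩)]


/-- Let `θ ∈ Aut(q)` have order `k`, `μ` a primitive `nk`-th root of
unity and `ζ = μⁿ`.  The map `θ̃` on `n·q = q ∔ … ∔ q` given on `n(q_i)` by
`θ̃(a₁,…,aₙ) = (a₂,…,aₙ, ζⁱ a₁)` — globally, `θ̃(a₁,…,aₙ) = (a₂,…,aₙ, θ(a₁))` — is a
Lie algebra automorphism of `n·q` of order `nk`, and for each `j` its `μʲ`-eigenspace is
`{(x, μʲx, …, μ^{(n−1)j}x) : x ∈ q_{j̄}}`, which is isomorphic as a `q₀`-module to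
`q_{j̄}` (where `j̄ = j mod k`, i.e. `q_{j̄}` is the `ζʲ`-eigenspace of `θ`). -/
theorem cyclic_extension_automorphism_order_and_eigenspaces
    {𝕜 L : Type*} [Field 𝕜] [CharZero 𝕜] [LieRing L] [LieAlgebra 𝕜 L] [Nontrivial L]
    (n k : ℕ) (hn : 0 < n) (hk : 0 < k)
    (μ : 𝕜) (hμ : IsPrimitiveRoot μ (n * k))
    (θ : L ≃ₗ[𝕜] L) (hbr : ∀ x y : L, θ ⁅x, y⁆ = ⁅θ x, θ y⁆)
    (hθk : (⇑θ)^[k] = id) (hθmin : ∀ j, 0 < j → j < k → (⇑θ)^[j] ≠ id)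
    (Θ : (Fin n → L) → (Fin n → L))
    (hΘ : ∀ (a : Fin n → L) (l : Fin n), Θ a l =
      if h : (l : ℕ) + 1 < n then a ⟨(l : ℕ) + 1, h⟩ else θ (a ⟨0, hn⟩)) :
    -- `θ̃` is linear …
    (∀ (c : 𝕜) (a a' : Fin n → L), Θ (c • a + a') = c • Θ a + Θ a') ∧
    -- … respects the (componentwise) bracket of `n·q`, hence is an automorphism …
    (∀ a a' : Fin n → L, Θ (fun l => ⁅a l, a' l⁆) = fun l => ⁅Θ a l, Θ a' l⁆) ∧
    -- … of order exactly `nk`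
    Θ^[n * k] = id ∧
    (∀ j, 0 < j → j < n * k → Θ^[j] ≠ id) ∧
    -- the `μʲ`-eigenspace of `θ̃` is `{(x, μʲ x, …, μ^{(n−1)j} x) : x ∈ q_{j̄}}`
    (∀ j : ℕ, {a : Fin n → L | Θ a = μ ^ j • a} =
      {a : Fin n → L | ∃ x : L, θ x = (μ ^ n) ^ j • x ∧
        ∀ l : Fin n, a l = μ ^ ((l : ℕ) * j) • x}) ∧
    -- the parametrisation `x ↦ (x, μʲx, …)` is injective and `q₀`-equivariant,
    -- so each eigenspace is isomorphic to `q_{j̄}` as a `q₀`-module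
    (∀ (j : ℕ) (x y : L),
      (fun l : Fin n => μ ^ ((l : ℕ) * j) • x) = (fun l : Fin n => μ ^ ((l : ℕ) * j) • y) →
      x = y) ∧
    (∀ (j : ℕ) (z x : L), θ z = z →
      (fun l : Fin n => ⁅z, μ ^ ((l : ℕ) * j) • x⁆) =
        (fun l : Fin n => μ ^ ((l : ℕ) * j) • ⁅z, x⁆)) := by
  refine ⟨?_, ?_, ?_, ?_, ?_, ?_, ?_⟩
  · -- linearity
    intro c a a'
    funext l
    by_cases h : (l : ℕ) + 1 < n <;>
      simp [hΘ, h, Pi.add_apply, Pi.smul_apply, map_add, map_smul]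
  · -- bracket
    intro a a'
    funext l
    by_cases h : (l : ℕ) + 1 < n <;> simp [hΘ, h, hbr]
  · -- order divides nk
    funext a l
    rw [theta_tilde_iter hn θ Θ hΘ]
    have he : (⟨((l : ℕ) + n * k) % n, Nat.mod_lt _ hn⟩ : Fin n) = l :=
      Fin.ext ((Nat.add_mul_mod_self_left _ _ _).trans (Nat.mod_eq_of_lt l.isLt))
    have hd : ((l : ℕ) + n * k) / n = k := by
      rw [Nat.add_mul_div_left _ _ hn, Nat.div_eq_of_lt l.isLt, Nat.zero_add]
    rw [he, hd, hθk]
    simp only [id_eq]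
  · -- exact order
    intro j hj hjnk hId
    obtain ⟨v, hv⟩ := exists_ne (0 : L)
    by_cases hmod : j % n = 0
    · refine hθmin (j / n) ?_ ?_ ?_
      · exact Nat.div_pos (Nat.le_of_dvd hj (Nat.dvd_of_mod_eq_zero hmod)) hn
      · exact (Nat.div_lt_iff_lt_mul hn).2 (by rw [Nat.mul_comm]; exact hjnk)
      · funext x
        have h0 := congrFun (congrFun hId (fun _ => x)) ⟨0, hn⟩
        rw [theta_tilde_iter hn θ Θ hΘ] at h0
        simpa using h0
    · have key : (⇑θ)^[(((⟨0, hn⟩ : Fin n) : ℕ) + j) / n] v = 0 := by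
        have h0 := congrFun
          (congrFun hId (fun l : Fin n => if (l : ℕ) = j % n then v else 0)) ⟨0, hn⟩
        rw [theta_tilde_iter hn θ Θ hΘ] at h0
        simpa [show ¬ (0 : ℕ) = j % n from fun h => hmod h.symm] using h0
      have hinj : Function.Injective ((⇑θ)^[(((⟨0, hn⟩ : Fin n) : ℕ) + j) / n]) :=
        Function.Injective.iterate θ.injective _
      have : v = 0 := hinj (key.trans (Function.iterate_fixed (map_zero θ) _).symm)
      exact hv this
  · -- eigenspaces
    intro j
    have hexp : j + (n - 1) * j = n * j := by
      have hn1 : n - 1 + 1 = n := by omega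
      calc j + (n - 1) * j = ((n - 1) + 1) * j := by ring
        _ = n * j := by rw [hn1]
    ext a
    simp only [Set.mem_setOf_eq]
    constructor
    · intro hEq
      have hall : ∀ (i : ℕ) (h : i < n), a ⟨i, h⟩ = μ ^ (i * j) • a ⟨0, hn⟩ := by
        intro i
        induction i with
        | zero => intro h; simp
        | succ i ih =>
          intro h
          have hi : i < n := Nat.lt_of_succ_lt h
          have h1 : Θ a ⟨i, hi⟩ = a ⟨i + 1, h⟩ := by rw [hΘ]; exact dif_pos h
          have h2 : Θ a ⟨i, hi⟩ = μ ^ j • a ⟨i, hi⟩ := by rw [hEq]; rfl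
          rw [← h1, h2, ih hi, smul_smul, ← pow_add]
          congr 2
          ring
      refine ⟨a ⟨0, hn⟩, ?_, fun l => hall l l.isLt⟩
      have hn1 : n - 1 < n := by omega
      have h1 : Θ a ⟨n - 1, hn1⟩ = θ (a ⟨0, hn⟩) := by
        rw [hΘ]; exact dif_neg (show ¬ (n - 1 + 1 < n) by omega)
      have h2 : Θ a ⟨n - 1, hn1⟩ = μ ^ j • a ⟨n - 1, hn1⟩ := by rw [hEq]; rfl
      rw [h1, hall (n - 1) hn1] at h2
      rw [h2, smul_smul, ← pow_add, hexp, pow_mul]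
    · rintro ⟨x, hx, hax⟩
      funext l
      rw [hΘ]
      by_cases h : (l : ℕ) + 1 < n
      · rw [dif_pos h]
        simp only [Pi.smul_apply]
        rw [hax, hax, smul_smul, ← pow_add]
        show μ ^ (((l : ℕ) + 1) * j) • x = μ ^ (j + (l : ℕ) * j) • x
        rw [show ((l : ℕ) + 1) * j = j + (l : ℕ) * j from by ring]
      · rw [dif_neg h]
        have hl : (l : ℕ) = n - 1 := by have := l.isLt; omega
        simp only [Pi.smul_apply]
        rw [hax, hax, hl, smul_smul, ← pow_add]
        show θ (μ ^ ((0 : ℕ) * j) • x) = μ ^ (j + (n - 1) * j) • x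
        rw [Nat.zero_mul, pow_zero, one_smul, hx, ← pow_mul, hexp]
  · -- injectivity
    intro j x y h
    have h0 := congrFun h ⟨0, hn⟩
    simpa using h0
  · -- equivariance
    intro j z x _
    funext l
    exact lie_smul _ _ _
end

section
/- For θ̃ the automorphism of n·q extending θ (as in Lemma on eigenspaces), the fixed-point subalgebra q⟨nk⟩^{θ̂} of the Takiff algebra q⟨nk⟩ under θ̂ is isomorphic to the cyclic contraction C_{θ̃}(n·q) of n·q associated with θ̃. -/
open Finset Module

/-- Let `θ ∈ Aut(q)` have order `k`, `μ` a primitive `nk`-th root of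
unity, `ζ = μⁿ`, and let `θ̃` be the order-`nk` automorphism of `n·q` extending `θ`
(cyclic shift composed with `θ`).  Then the fixed-point subalgebra `q⟨nk⟩^{θ̂}` of the
Takiff algebra `q⟨nk⟩` under `θ̂` (tuples `x` with `x_i ∈ q_{ī}`, with the truncated
Takiff bracket) is isomorphic to the cyclic contraction `C_{θ̃}(n·q)` of `n·q`
associated with the `ℤ_{nk}`-grading of `n·q` by `θ̃`-eigenspaces. -/
theorem takiff_fixed_points_iso_cyclic_contraction
    {𝕜 L : Type*} [Field 𝕜] [CharZero 𝕜] [LieRing L] [LieAlgebra 𝕜 L]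
    (n k : ℕ) (hn : 0 < n) (hk : 0 < k)
    (μ : 𝕜) (hμ : IsPrimitiveRoot μ (n * k))
    (θ : L ≃ₗ[𝕜] L) (hbr : ∀ x y : L, θ ⁅x, y⁆ = ⁅θ x, θ y⁆)
    (hθk : (⇑θ)^[k] = id) (hθmin : ∀ j, 0 < j → j < k → (⇑θ)^[j] ≠ id)
    -- the extension `θ̃` of `θ` to `n·q`
    (Θ : (Fin n → L) → (Fin n → L))
    (hΘ : ∀ (a : Fin n → L) (l : Fin n), Θ a l =
      if h : (l : ℕ) + 1 < n then a ⟨(l : ℕ) + 1, h⟩ else θ (a ⟨0, hn⟩))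
    -- the projections onto the `μʲ`-eigenspaces of `θ̃`
    (proj : ℕ → (Fin n → L) → (Fin n → L))
    (hproj : ∀ (j : ℕ) (a : Fin n → L), proj j a =
      ((n * k : ℕ) : 𝕜)⁻¹ • ∑ s ∈ Finset.range (n * k), (μ⁻¹) ^ (j * s) • Θ^[s] a)
    -- the bracket of the cyclic contraction `C_{θ̃}(n·q)`
    (Bc : (Fin n → L) → (Fin n → L) → (Fin n → L))
    (hBc : ∀ a a' : Fin n → L, Bc a a' =
      ∑ i ∈ Finset.range (n * k), ∑ j ∈ Finset.range (n * k),
        if i + j ≤ n * k - 1 then (fun l => ⁅proj i a l, proj j a' l⁆) else 0) :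
    -- the isomorphism `q⟨nk⟩^{θ̂} ≃ C_{θ̃}(n·q)`
    ∃ e : (Fin (n * k) → L) →ₗ[𝕜] (Fin n → L),
      Set.InjOn e {x : Fin (n * k) → L |
        ∀ i : Fin (n * k), θ (x i) = (μ ^ n) ^ (i : ℕ) • x i} ∧
      (∀ a : Fin n → L, ∃ x : Fin (n * k) → L,
        (∀ i : Fin (n * k), θ (x i) = (μ ^ n) ^ (i : ℕ) • x i) ∧ e x = a) ∧
      (∀ x y : Fin (n * k) → L,
        (∀ i : Fin (n * k), θ (x i) = (μ ^ n) ^ (i : ℕ) • x i) →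
        (∀ i : Fin (n * k), θ (y i) = (μ ^ n) ^ (i : ℕ) • y i) →
        e (takiffBracket (n * k) x y) = Bc (e x) (e y)) := by
  classical
  have hN : 0 < n * k := Nat.mul_pos hn hk
  have hμN : μ ^ (n * k) = 1 := hμ.pow_eq_one
  have hμ0 : μ ≠ 0 := by
    intro h
    rw [h, zero_pow hN.ne'] at hμN
    exact zero_ne_one hμN
  have hNne : ((n * k : ℕ) : 𝕜) ≠ 0 := Nat.cast_ne_zero.mpr hN.ne'
  -- geometric sums of roots of unity
  have geom : ∀ c : 𝕜, c ^ (n * k) = 1 →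
      ∑ s ∈ Finset.range (n * k), c ^ s = if c = 1 then ((n * k : ℕ) : 𝕜) else 0 := by
    intro c hc
    by_cases h1 : c = 1
    · simp [h1]
    · rw [if_neg h1, geom_sum_eq h1, hc, sub_self, zero_div]
  have ortho : ∀ i j : ℕ, i < n * k → j < n * k →
      ∑ s ∈ Finset.range (n * k), (μ ^ i * μ⁻¹ ^ j) ^ s =
        if i = j then ((n * k : ℕ) : 𝕜) else 0 := by
    intro i j hi hj
    have h1 : (μ ^ i) ^ (n * k) = 1 := by rw [← pow_mul, mul_comm, pow_mul, hμN, one_pow]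
    have h2 : (μ⁻¹ ^ j) ^ (n * k) = 1 := by
      rw [inv_pow, inv_pow, ← pow_mul, mul_comm, pow_mul, hμN, one_pow, inv_one]
    have hc : (μ ^ i * μ⁻¹ ^ j) ^ (n * k) = 1 := by rw [mul_pow, h1, h2, one_mul]
    rw [geom _ hc]
    congr 1
    simp only [eq_iff_iff]
    rw [inv_pow, mul_inv_eq_one₀ (pow_ne_zero _ hμ0)]
    exact ⟨fun h => hμ.pow_inj hi hj h, fun h => by rw [h]⟩
  -- `Θ` is linear
  have hΘadd : ∀ a b, Θ (a + b) = Θ a + Θ b := by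
    intro a b; funext l
    simp only [Pi.add_apply]
    rw [hΘ, hΘ, hΘ]
    split_ifs <;> simp
  have hΘsmul : ∀ (c : 𝕜) a, Θ (c • a) = c • Θ a := by
    intro c a; funext l
    simp only [Pi.smul_apply]
    rw [hΘ, hΘ]
    split_ifs <;> simp
  have hΘsum : ∀ {ι : Type} (s : Finset ι) (f : ι → (Fin n → L)),
      Θ (∑ i ∈ s, f i) = ∑ i ∈ s, Θ (f i) := by
    intro ι s f
    induction s using Finset.cons_induction with
    | empty =>
      simp only [Finset.sum_empty]
      funext l; rw [hΘ]; split_ifs <;> simp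
    | cons i s hi ih => rw [Finset.sum_cons, hΘadd, ih, Finset.sum_cons]
  -- the iterates of `Θ`
  have iterval : ∀ (s : ℕ) (a : Fin n → L) (l : Fin n) (h : (l : ℕ) + s < n),
      Θ^[s] a l = a ⟨(l : ℕ) + s, h⟩ := by
    intro s
    induction s with
    | zero => intro a l h; simp
    | succ s ih =>
      intro a l h
      have hls : (l : ℕ) + s < n := by omega
      rw [Function.iterate_succ_apply, ih (Θ a) l hls, hΘ]
      have hcond : ((⟨(l : ℕ) + s, hls⟩ : Fin n) : ℕ) + 1 < n := h
      rw [dif_pos hcond]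
      exact congrArg a (Fin.ext (by show (l : ℕ) + s + 1 = (l : ℕ) + (s + 1); omega))
  have iterN : ∀ (a : Fin n → L) (l : Fin n), Θ^[n] a l = θ (a l) := by
    intro a l
    have hsplit : Θ^[n] a = Θ^[n - 1 - (l : ℕ)] (Θ^[(l : ℕ) + 1] a) := by
      rw [← Function.iterate_add_apply]
      congr 1
      omega
    rw [hsplit, iterval _ _ l (by omega)]
    have h1 : (⟨(l : ℕ) + (n - 1 - (l : ℕ)), by omega⟩ : Fin n) = ⟨n - 1, by omega⟩ :=
      Fin.ext (by show (l : ℕ) + (n - 1 - (l : ℕ)) = n - 1; omega)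
    rw [h1, Function.iterate_succ_apply', hΘ]
    rw [dif_neg (show ¬ (n - 1 + 1 < n) by omega)]
    rw [iterval _ _ ⟨0, hn⟩ (show 0 + (l : ℕ) < n by omega)]
    exact congrArg (⇑θ ∘ a) (Fin.ext (by show 0 + (l : ℕ) = (l : ℕ); omega))
  have iterNK : ∀ a : Fin n → L, Θ^[n * k] a = a := by
    intro a
    rw [Function.iterate_mul]
    have key : ∀ (j : ℕ) (a : Fin n → L), (Θ^[n])^[j] a = fun l => (⇑θ)^[j] (a l) := by
      intro j
      induction j with
      | zero => intro a; simp
      | succ j ih =>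
        intro a
        rw [Function.iterate_succ_apply', ih a]
        funext l
        rw [iterN]
        simp [Function.iterate_succ_apply']
    rw [key k a, hθk]
    simp
  -- every projection is an eigenvector of `Θ`
  have projeig : ∀ (j : ℕ) (a : Fin n → L), Θ (proj j a) = μ ^ j • proj j a := by
    intro j a
    rw [hproj, hΘsmul, hΘsum]
    have h1 : ∀ s, Θ ((μ⁻¹) ^ (j * s) • Θ^[s] a)
        = μ ^ j • ((μ⁻¹) ^ (j * (s + 1)) • Θ^[s + 1] a) := by
      intro s
      rw [hΘsmul, ← Function.iterate_succ_apply' Θ, smul_smul]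
      congr 1
      rw [mul_add, pow_add, mul_one]
      field_simp
      rw [one_div, inv_pow, mul_inv_cancel₀ (pow_ne_zero _ hμ0)]
    rw [Finset.sum_congr rfl fun s _ => h1 s]
    have shift : ∑ s ∈ Finset.range (n * k), (μ⁻¹) ^ (j * (s + 1)) • Θ^[s + 1] a
        = ∑ s ∈ Finset.range (n * k), (μ⁻¹) ^ (j * s) • Θ^[s] a := by
      have h2 := Finset.sum_range_succ' (fun s => (μ⁻¹) ^ (j * s) • Θ^[s] a) (n * k)
      have h3 := Finset.sum_range_succ (fun s => (μ⁻¹) ^ (j * s) • Θ^[s] a) (n * k)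
      have hlast : (μ⁻¹) ^ (j * (n * k)) • Θ^[n * k] a = (μ⁻¹) ^ (j * 0) • Θ^[0] a := by
        rw [iterNK]
        have hone : (μ⁻¹ : 𝕜) ^ (j * (n * k)) = 1 := by
          rw [inv_pow, mul_comm j, pow_mul, hμN, one_pow, inv_one]
        simp [hone]
      have h4 := h2.symm.trans h3
      rw [hlast] at h4
      simpa using add_right_cancel h4
    rw [← Finset.smul_sum, shift, smul_comm (((n * k : ℕ) : 𝕜))⁻¹ (μ ^ j)]
  -- values of eigenvectors of `Θ`
  have eigval : ∀ (c : 𝕜) (p : Fin n → L), Θ p = c • p →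
      ∀ (m : ℕ) (h : m < n), p ⟨m, h⟩ = c ^ m • p ⟨0, hn⟩ := by
    intro c p hp m
    induction m with
    | zero => intro h; simp
    | succ m ih =>
      intro h
      have hm : m < n := by omega
      have h2 := congrFun hp (⟨m, hm⟩ : Fin n)
      rw [hΘ, dif_pos (show m + 1 < n from h)] at h2
      rw [show (⟨m + 1, h⟩ : Fin n) = ⟨((⟨m, hm⟩ : Fin n) : ℕ) + 1, h⟩ from rfl, h2]
      simp only [Pi.smul_apply]
      rw [ih hm, smul_smul, pow_succ, mul_comm]
  have eigtheta : ∀ (c : 𝕜) (p : Fin n → L), Θ p = c • p →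
      θ (p ⟨0, hn⟩) = c ^ n • p ⟨0, hn⟩ := by
    intro c p hp
    have h1 := congrFun hp (⟨n - 1, by omega⟩ : Fin n)
    rw [hΘ, dif_neg (show ¬ (n - 1 + 1 < n) by omega)] at h1
    rw [h1]
    simp only [Pi.smul_apply]
    rw [eigval c p hp (n - 1) (by omega), smul_smul, ← pow_succ']
    congr 2
    omega
  -- completeness of the projections
  have projsum : ∀ a : Fin n → L, ∑ i : Fin (n * k), proj (i : ℕ) a = a := by
    intro a
    rw [Fin.sum_univ_eq_sum_range (fun i => proj i a)]
    have expand : ∀ i : ℕ, proj i a = ∑ s ∈ Finset.range (n * k),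
        ((μ⁻¹ ^ s) ^ i * ((n * k : ℕ) : 𝕜)⁻¹) • Θ^[s] a := by
      intro i
      rw [hproj, Finset.smul_sum]
      refine Finset.sum_congr rfl fun s _ => ?_
      rw [smul_smul, ← pow_mul, mul_comm (s : ℕ) i]
      ring_nf
    rw [Finset.sum_congr rfl fun i _ => expand i, Finset.sum_comm]
    have inner : ∀ s ∈ Finset.range (n * k),
        ∑ i ∈ Finset.range (n * k), ((μ⁻¹ ^ s) ^ i * ((n * k : ℕ) : 𝕜)⁻¹) • Θ^[s] a
        = if s = 0 then a else 0 := by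
      intro s hs
      rw [← Finset.sum_smul, ← Finset.sum_mul]
      have hc : (μ⁻¹ ^ s) ^ (n * k) = 1 := by
        rw [inv_pow, inv_pow, ← pow_mul, mul_comm, pow_mul, hμN, one_pow, inv_one]
      rw [geom _ hc]
      have hiff : (μ⁻¹ ^ s = 1) ↔ s = 0 := by
        rw [inv_pow, inv_eq_one]
        constructor
        · intro h
          exact hμ.pow_inj (Finset.mem_range.mp hs) hN (by rw [h, pow_zero])
        · intro h; rw [h, pow_zero]
      by_cases h0 : s = 0
      · rw [if_pos (hiff.mpr h0), if_pos h0, h0]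
        rw [mul_inv_cancel₀ hNne, one_smul]
        simp
      · rw [if_neg (fun h => h0 (hiff.mp h)), if_neg h0, zero_mul, zero_smul]
    rw [Finset.sum_congr rfl inner, Finset.sum_ite_eq' (Finset.range (n * k)) 0 fun _ => a]
    rw [if_pos (Finset.mem_range.mpr hN)]
  -- key projection formula for fixed points
  have Pj : ∀ (x : Fin (n * k) → L),
      (∀ i : Fin (n * k), θ (x i) = (μ ^ n) ^ (i : ℕ) • x i) →
      ∀ (j : ℕ) (hj : j < n * k) (l : Fin n),
      proj j (fun l' => ∑ i : Fin (n * k), μ ^ ((i : ℕ) * (l' : ℕ)) • x i) l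
        = μ ^ (j * (l : ℕ)) • x ⟨j, hj⟩ := by
    intro x hx j hj l
    set E : Fin n → L := fun l' => ∑ i : Fin (n * k), μ ^ ((i : ℕ) * (l' : ℕ)) • x i with hE
    have A : ∀ (s : ℕ) (l : Fin n),
        Θ^[s] E l = ∑ i : Fin (n * k), μ ^ ((i : ℕ) * (s + (l : ℕ))) • x i := by
      intro s
      induction s with
      | zero =>
        intro l
        simp only [Function.iterate_zero, id_eq, hE, zero_add]
      | succ s ih =>
        intro l
        rw [Function.iterate_succ_apply', hΘ]
        split_ifs with h
        · rw [ih ⟨(l : ℕ) + 1, h⟩]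
          refine Finset.sum_congr rfl fun i _ => ?_
          congr 2
          show (i : ℕ) * (s + ((l : ℕ) + 1)) = (i : ℕ) * (s + 1 + (l : ℕ))
          ring_nf
        · have hl : (l : ℕ) = n - 1 := by omega
          rw [ih ⟨0, hn⟩]
          simp only [map_sum, map_smul, hx]
          refine Finset.sum_congr rfl fun i _ => ?_
          rw [smul_smul, ← pow_mul, ← pow_add]
          congr 1
          rw [show s + 1 + (l : ℕ) = s + n by omega]
          ring
    rw [hproj]
    simp only [Pi.smul_apply, Finset.sum_apply]
    have step1 : ∀ s, μ⁻¹ ^ (j * s) • Θ^[s] E l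
        = ∑ i : Fin (n * k), ((μ ^ (i : ℕ) * μ⁻¹ ^ j) ^ s * μ ^ ((i : ℕ) * (l : ℕ))) • x i := by
      intro s
      rw [A s l, Finset.smul_sum]
      refine Finset.sum_congr rfl fun i _ => ?_
      rw [smul_smul]
      congr 1
      rw [mul_add, pow_add, mul_pow, ← pow_mul, ← pow_mul]
      ring
    rw [Finset.sum_congr rfl fun s _ => step1 s, Finset.sum_comm]
    have step2 : ∀ i : Fin (n * k),
        ∑ s ∈ Finset.range (n * k),
            ((μ ^ (i : ℕ) * μ⁻¹ ^ j) ^ s * μ ^ ((i : ℕ) * (l : ℕ))) • x i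
        = ((if (i : ℕ) = j then ((n * k : ℕ) : 𝕜) else 0) * μ ^ ((i : ℕ) * (l : ℕ))) • x i := by
      intro i
      rw [← Finset.sum_smul, ← Finset.sum_mul, ortho (i : ℕ) j i.isLt hj]
    rw [Finset.sum_congr rfl fun i _ => step2 i]
    rw [Finset.sum_eq_single_of_mem (⟨j, hj⟩ : Fin (n * k)) (Finset.mem_univ _)
      (by intro b _ hb
          rw [if_neg (by simpa [Fin.ext_iff] using hb), zero_mul, zero_smul])]
    rw [if_pos rfl, smul_smul, ← mul_assoc, inv_mul_cancel₀ hNne, one_mul]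
  -- the linear map `e`
  refine ⟨{ toFun := fun x => fun l' => ∑ i : Fin (n * k), μ ^ ((i : ℕ) * (l' : ℕ)) • x i
            map_add' := by
              intro x y; funext l
              simp [smul_add, Finset.sum_add_distrib]
            map_smul' := by
              intro c x; funext l
              simp [Finset.smul_sum, smul_smul, mul_comm] }, ?_, ?_, ?_⟩
  · -- injectivity on the fixed-point set
    intro x hx y hy hxy
    simp only [Set.mem_setOf_eq] at hx hy
    simp only [LinearMap.coe_mk, AddHom.coe_mk] at hxy
    have hxy' : (fun l' : Fin n => ∑ i : Fin (n * k), μ ^ ((i : ℕ) * (l' : ℕ)) • x i)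
        = (fun l' : Fin n => ∑ i : Fin (n * k), μ ^ ((i : ℕ) * (l' : ℕ)) • y i) := hxy
    funext i
    have h1 := Pj x hx (i : ℕ) i.isLt ⟨0, hn⟩
    have h2 := Pj y hy (i : ℕ) i.isLt ⟨0, hn⟩
    rw [hxy'] at h1
    rw [h1] at h2
    simpa using h2
  · -- surjectivity
    intro a
    refine ⟨fun i => proj (i : ℕ) a ⟨0, hn⟩, ?_, ?_⟩
    · intro i
      rw [eigtheta (μ ^ (i : ℕ)) (proj (i : ℕ) a) (projeig (i : ℕ) a)]
      rw [← pow_mul, mul_comm, pow_mul]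
    · funext l
      show ∑ i : Fin (n * k), μ ^ ((i : ℕ) * (l : ℕ)) • proj (i : ℕ) a ⟨0, hn⟩ = a l
      have hterm : ∀ i : Fin (n * k),
          μ ^ ((i : ℕ) * (l : ℕ)) • proj (i : ℕ) a ⟨0, hn⟩ = proj (i : ℕ) a l := by
        intro i
        have h3 := eigval (μ ^ (i : ℕ)) (proj (i : ℕ) a) (projeig (i : ℕ) a) (l : ℕ) l.isLt
        rw [show (⟨(l : ℕ), l.isLt⟩ : Fin n) = l from rfl] at h3
        rw [← pow_mul] at h3
        exact h3.symm
      rw [Finset.sum_congr rfl fun i _ => hterm i, ← Finset.sum_apply l Finset.univ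
        (fun i : Fin (n * k) => proj (i : ℕ) a), projsum a]
  · -- the bracket correspondence
    intro x y hx hy
    show (fun l' : Fin n => ∑ m : Fin (n * k), μ ^ ((m : ℕ) * (l' : ℕ)) • takiffBracket (n * k) x y m)
      = Bc (fun l' => ∑ i : Fin (n * k), μ ^ ((i : ℕ) * (l' : ℕ)) • x i)
           (fun l' => ∑ i : Fin (n * k), μ ^ ((i : ℕ) * (l' : ℕ)) • y i)
    funext l
    show ∑ m : Fin (n * k), μ ^ ((m : ℕ) * (l : ℕ)) • takiffBracket (n * k) x y m
      = Bc (fun l' => ∑ i : Fin (n * k), μ ^ ((i : ℕ) * (l' : ℕ)) • x i)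
           (fun l' => ∑ i : Fin (n * k), μ ^ ((i : ℕ) * (l' : ℕ)) • y i) l
    have LHS : ∑ m : Fin (n * k), μ ^ ((m : ℕ) * (l : ℕ)) • takiffBracket (n * k) x y m
        = ∑ i : Fin (n * k), ∑ j : Fin (n * k),
          if (i : ℕ) + (j : ℕ) < n * k
          then μ ^ (((i : ℕ) + (j : ℕ)) * (l : ℕ)) • ⁅x i, y j⁆ else 0 := by
      unfold takiffBracket
      calc ∑ m : Fin (n * k), μ ^ ((m : ℕ) * (l : ℕ)) •
             ∑ i : Fin (n * k), ∑ j : Fin (n * k),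
               (if (i : ℕ) + (j : ℕ) = (m : ℕ) then ⁅x i, y j⁆ else 0)
          = ∑ m : Fin (n * k), ∑ i : Fin (n * k), ∑ j : Fin (n * k),
              (if (i : ℕ) + (j : ℕ) = (m : ℕ)
               then μ ^ ((m : ℕ) * (l : ℕ)) • ⁅x i, y j⁆ else 0) := by
            refine Finset.sum_congr rfl fun m _ => ?_
            rw [Finset.smul_sum]
            refine Finset.sum_congr rfl fun i _ => ?_
            rw [Finset.smul_sum]
            refine Finset.sum_congr rfl fun j _ => ?_
            rw [smul_ite, smul_zero]
        _ = ∑ i : Fin (n * k), ∑ j : Fin (n * k), ∑ m : Fin (n * k),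
              (if (i : ℕ) + (j : ℕ) = (m : ℕ)
               then μ ^ ((m : ℕ) * (l : ℕ)) • ⁅x i, y j⁆ else 0) := by
            rw [Finset.sum_comm]
            exact Finset.sum_congr rfl fun i _ => Finset.sum_comm
        _ = _ := by
            refine Finset.sum_congr rfl fun i _ => Finset.sum_congr rfl fun j _ => ?_
            rw [Fin.sum_univ_eq_sum_range
              (fun m => if (i : ℕ) + (j : ℕ) = m
                then μ ^ (m * (l : ℕ)) • ⁅x i, y j⁆ else 0) (n * k)]
            rw [Finset.sum_ite_eq (Finset.range (n * k)) ((i : ℕ) + (j : ℕ))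
              (fun m => μ ^ (m * (l : ℕ)) • ⁅x i, y j⁆)]
            simp [Finset.mem_range]
    rw [LHS, hBc]
    rw [Finset.sum_apply]
    have RHS1 : ∀ i' ∈ Finset.range (n * k),
        (∑ j' ∈ Finset.range (n * k),
          if i' + j' ≤ n * k - 1
          then (fun l' => ⁅proj i' (fun l'' => ∑ i : Fin (n * k),
              μ ^ ((i : ℕ) * (l'' : ℕ)) • x i) l',
            proj j' (fun l'' => ∑ i : Fin (n * k),
              μ ^ ((i : ℕ) * (l'' : ℕ)) • y i) l'⁆) else 0) l
        = ∑ j' ∈ Finset.range (n * k),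
          (if i' + j' ≤ n * k - 1
           then ⁅proj i' (fun l'' => ∑ i : Fin (n * k),
               μ ^ ((i : ℕ) * (l'' : ℕ)) • x i) l,
             proj j' (fun l'' => ∑ i : Fin (n * k),
               μ ^ ((i : ℕ) * (l'' : ℕ)) • y i) l⁆ else 0) := by
      intro i' _
      rw [Finset.sum_apply]
      refine Finset.sum_congr rfl fun j' _ => ?_
      by_cases h : i' + j' ≤ n * k - 1
      · rw [if_pos h, if_pos h]
      · rw [if_neg h, if_neg h]; rfl
    rw [Finset.sum_congr rfl RHS1]
    rw [← Fin.sum_univ_eq_sum_range (fun i' => ∑ j' ∈ Finset.range (n * k),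
      (if i' + j' ≤ n * k - 1
       then ⁅proj i' (fun l'' => ∑ i : Fin (n * k), μ ^ ((i : ℕ) * (l'' : ℕ)) • x i) l,
         proj j' (fun l'' => ∑ i : Fin (n * k), μ ^ ((i : ℕ) * (l'' : ℕ)) • y i) l⁆
       else 0)) (n * k)]
    refine Finset.sum_congr rfl fun i _ => ?_
    rw [← Fin.sum_univ_eq_sum_range (fun j' =>
      (if (i : ℕ) + j' ≤ n * k - 1
       then ⁅proj (i : ℕ) (fun l'' => ∑ i : Fin (n * k), μ ^ ((i : ℕ) * (l'' : ℕ)) • x i) l,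
         proj j' (fun l'' => ∑ i : Fin (n * k), μ ^ ((i : ℕ) * (l'' : ℕ)) • y i) l⁆
       else 0)) (n * k)]
    refine Finset.sum_congr rfl fun j _ => ?_
    have hcond : ((i : ℕ) + (j : ℕ) < n * k) ↔ ((i : ℕ) + (j : ℕ) ≤ n * k - 1) := by omega
    by_cases h : (i : ℕ) + (j : ℕ) < n * k
    · rw [if_pos h, if_pos (hcond.mp h)]
      rw [Pj x hx (i : ℕ) i.isLt l, Pj y hy (j : ℕ) j.isLt l]
      rw [smul_lie, lie_smul, smul_smul, ← pow_add, add_mul]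
    · rw [if_neg h, if_neg (fun hh => h (hcond.mpr hh))]
end

section
/- If θ̃ is the cyclic permutation automorphism of n·q (cyclically permuting the n summands), then the Takiff algebra q⟨n⟩ is isomorphic to the cyclic contraction C_{θ̃}(n·q). -/
open Finset Module

section Aux
variable {𝕜 : Type*} [Field 𝕜] {n : ℕ} {μ : 𝕜}

lemma aux_pow_mod (hμ1 : μ ^ n = 1) (a : ℕ) : μ ^ (a % n) = μ ^ a := by
  conv_rhs => rw [← Nat.div_add_mod a n]
  rw [pow_add, pow_mul, hμ1, one_pow, one_mul]

lemma aux_pow_mul_mod (hμ1 : μ ^ n = 1) (i m : ℕ) : μ ^ (i * (m % n)) = μ ^ (i * m) := by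
  rw [← aux_pow_mod hμ1 (i * (m % n)), ← aux_pow_mod hμ1 (i * m),
    Nat.mul_mod, Nat.mul_mod i m, Nat.mod_mod_of_dvd _ dvd_rfl]

lemma aux_orth (hn : 0 < n) (hμ : IsPrimitiveRoot μ n) {i j : ℕ} (hi : i < n) (hj : j < n) :
    ∑ s ∈ Finset.range n, (μ ^ i * (μ⁻¹) ^ j) ^ s = if i = j then ((n : ℕ) : 𝕜) else 0 := by
  have hμ0 : μ ≠ 0 := by
    intro h
    have := hμ.pow_eq_one
    rw [h, zero_pow hn.ne'] at this
    exact zero_ne_one this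
  by_cases h : i = j
  · subst h
    have : μ ^ i * μ⁻¹ ^ i = 1 := by
      rw [inv_pow, mul_inv_cancel₀ (pow_ne_zero _ hμ0)]
    simp only [this, one_pow, Finset.sum_const, Finset.card_range, nsmul_eq_mul, mul_one, if_true, eq_self_iff_true]
  · have hz1 : μ ^ i * μ⁻¹ ^ j ≠ 1 := by
      intro hz
      rw [inv_pow, mul_inv_eq_one₀ (pow_ne_zero _ hμ0)] at hz
      exact h (hμ.pow_inj hi hj hz)
    have hinv : (μ⁻¹ : 𝕜) ^ n = 1 := by rw [inv_pow, hμ.pow_eq_one, inv_one]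
    have hzn : (μ ^ i * μ⁻¹ ^ j) ^ n = 1 := by
      rw [mul_pow, ← pow_mul, mul_comm i n, pow_mul, hμ.pow_eq_one, one_pow, one_mul,
        ← pow_mul, mul_comm j n, pow_mul, hinv, one_pow]
    rw [geom_sum_eq hz1, hzn, sub_self, zero_div, if_neg h]

lemma aux_delta_sum {L : Type*} [AddCommGroup L] [Module 𝕜 L] [CharZero 𝕜] (hn : 0 < n)
    (v : Fin n → L) (k : Fin n) (c : Fin n → 𝕜)
    (hc : ∀ q, c q = if (q : ℕ) = (k : ℕ) then ((n : ℕ) : 𝕜) else 0) :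
    ((n : ℕ) : 𝕜)⁻¹ • ∑ q : Fin n, c q • v q = v k := by
  have hn0 : ((n : ℕ) : 𝕜) ≠ 0 := Nat.cast_ne_zero.mpr hn.ne'
  have h1 : ∀ q : Fin n, c q • v q = if q = k then ((n : ℕ) : 𝕜) • v q else 0 := by
    intro q
    rw [hc q]
    by_cases h : q = k
    · simp [h]
    · rw [if_neg (fun hv => h (Fin.val_inj.mp hv)), if_neg h, zero_smul]
  rw [Finset.sum_congr rfl (fun q _ => h1 q), Finset.sum_ite_eq' Finset.univ k,
    if_pos (Finset.mem_univ k), smul_smul, inv_mul_cancel₀ hn0, one_smul]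

end Aux

/-- Let `θ̃` be the cyclic permutation automorphism of `n·q`
(cyclically permuting the `n` summands).  Then the Takiff algebra `q⟨n⟩` is isomorphic
to the cyclic contraction `C_{θ̃}(n·q)`, i.e. the contraction of `n·q` associated with
the `ℤ_n`-grading by `θ̃`-eigenspaces. -/
theorem takiff_iso_cyclic_contraction_of_permutation
    {𝕜 L : Type*} [Field 𝕜] [CharZero 𝕜] [IsAlgClosed 𝕜] [LieRing L] [LieAlgebra 𝕜 L]
    (n : ℕ) (hn : 0 < n)
    (μ : 𝕜) (hμ : IsPrimitiveRoot μ n)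
    -- the cyclic shift `θ̃` on `n·q`
    (Θ : (Fin n → L) → (Fin n → L))
    (hΘ : ∀ (a : Fin n → L) (l : Fin n), Θ a l =
      if h : (l : ℕ) + 1 < n then a ⟨(l : ℕ) + 1, h⟩ else a ⟨0, hn⟩)
    -- the projections onto the `μʲ`-eigenspaces of `θ̃`
    (proj : ℕ → (Fin n → L) → (Fin n → L))
    (hproj : ∀ (j : ℕ) (a : Fin n → L), proj j a =
      ((n : ℕ) : 𝕜)⁻¹ • ∑ s ∈ Finset.range n, (μ⁻¹) ^ (j * s) • Θ^[s] a)
    -- the bracket of the cyclic contraction `C_{θ̃}(n·q)`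
    (Bc : (Fin n → L) → (Fin n → L) → (Fin n → L))
    (hBc : ∀ a a' : Fin n → L, Bc a a' =
      ∑ i ∈ Finset.range n, ∑ j ∈ Finset.range n,
        if i + j ≤ n - 1 then (fun l => ⁅proj i a l, proj j a' l⁆) else 0) :
    -- the isomorphism `q⟨n⟩ ≃ C_{θ̃}(n·q)`
    ∃ e : (Fin n → L) ≃ₗ[𝕜] (Fin n → L),
      ∀ x y : Fin n → L, e (takiffBracket n x y) = Bc (e x) (e y) := by
  classical
  have hμ1 : μ ^ n = 1 := hμ.pow_eq_one
  have hn0 : ((n : ℕ) : 𝕜) ≠ 0 := Nat.cast_ne_zero.mpr hn.ne'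
  let Ef : (Fin n → L) → (Fin n → L) :=
    fun x l => ∑ i : Fin n, μ ^ ((i : ℕ) * (l : ℕ)) • x i
  let Ff : (Fin n → L) → (Fin n → L) :=
    fun x i => ((n : ℕ) : 𝕜)⁻¹ • ∑ l : Fin n, (μ⁻¹) ^ ((i : ℕ) * (l : ℕ)) • x l
  -- F is a left inverse of E
  have hFE : ∀ (x : Fin n → L) (i : Fin n), Ff (Ef x) i = x i := by
    intro x i
    show ((n : ℕ) : 𝕜)⁻¹ • ∑ l : Fin n, (μ⁻¹) ^ ((i : ℕ) * (l : ℕ)) •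
        (∑ j : Fin n, μ ^ ((j : ℕ) * (l : ℕ)) • x j) = x i
    have h1 : ∀ l : Fin n, (μ⁻¹) ^ ((i : ℕ) * (l : ℕ)) •
        (∑ j : Fin n, μ ^ ((j : ℕ) * (l : ℕ)) • x j)
        = ∑ j : Fin n, (μ ^ (j : ℕ) * (μ⁻¹) ^ (i : ℕ)) ^ (l : ℕ) • x j := by
      intro l
      rw [Finset.smul_sum]
      refine Finset.sum_congr rfl fun j _ => ?_
      rw [smul_smul, mul_pow, ← pow_mul, ← pow_mul]
      ring_nf
    rw [Finset.sum_congr rfl fun l _ => h1 l, Finset.sum_comm]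
    have h2 : ∀ j : Fin n, ∑ l : Fin n, (μ ^ (j : ℕ) * (μ⁻¹) ^ (i : ℕ)) ^ (l : ℕ) • x j
        = (∑ p ∈ Finset.range n, (μ ^ (j : ℕ) * (μ⁻¹) ^ (i : ℕ)) ^ p) • x j := fun j => by
      rw [← Finset.sum_smul, Fin.sum_univ_eq_sum_range
        (fun p => (μ ^ (j : ℕ) * (μ⁻¹) ^ (i : ℕ)) ^ p)]
    rw [Finset.sum_congr rfl fun j _ => h2 j]
    exact aux_delta_sum hn x i _ (fun q => aux_orth hn hμ q.isLt i.isLt)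
  -- F is a right inverse of E
  have hEF : ∀ (x : Fin n → L) (l : Fin n), Ef (Ff x) l = x l := by
    intro x l
    show ∑ i : Fin n, μ ^ ((i : ℕ) * (l : ℕ)) •
        (((n : ℕ) : 𝕜)⁻¹ • ∑ m : Fin n, (μ⁻¹) ^ ((i : ℕ) * (m : ℕ)) • x m) = x l
    have h1 : ∀ i : Fin n, μ ^ ((i : ℕ) * (l : ℕ)) •
        (((n : ℕ) : 𝕜)⁻¹ • ∑ m : Fin n, (μ⁻¹) ^ ((i : ℕ) * (m : ℕ)) • x m)
        = ((n : ℕ) : 𝕜)⁻¹ • ∑ m : Fin n, (μ ^ (l : ℕ) * (μ⁻¹) ^ (m : ℕ)) ^ (i : ℕ) • x m := by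
      intro i
      rw [smul_comm, Finset.smul_sum]
      congr 1
      refine Finset.sum_congr rfl fun m _ => ?_
      rw [smul_smul, mul_pow, ← pow_mul, ← pow_mul, mul_comm (l : ℕ) (i : ℕ),
        mul_comm (m : ℕ) (i : ℕ)]
    rw [Finset.sum_congr rfl fun i _ => h1 i, ← Finset.smul_sum, Finset.sum_comm]
    have h2 : ∀ m : Fin n, ∑ i : Fin n, (μ ^ (l : ℕ) * (μ⁻¹) ^ (m : ℕ)) ^ (i : ℕ) • x m
        = (∑ p ∈ Finset.range n, (μ ^ (l : ℕ) * (μ⁻¹) ^ (m : ℕ)) ^ p) • x m := fun m => by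
      rw [← Finset.sum_smul, Fin.sum_univ_eq_sum_range
        (fun p => (μ ^ (l : ℕ) * (μ⁻¹) ^ (m : ℕ)) ^ p)]
    rw [Finset.sum_congr rfl fun m _ => h2 m]
    refine aux_delta_sum hn x l _ (fun q => ?_)
    rw [aux_orth hn hμ l.isLt q.isLt]
    exact if_congr eq_comm rfl rfl
  -- iterates of the cyclic shift
  have hiter : ∀ (s : ℕ) (a : Fin n → L) (l : Fin n),
      Θ^[s] a l = a ⟨((l : ℕ) + s) % n, Nat.mod_lt _ hn⟩ := by
    intro s
    induction s with
    | zero =>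
      intro a l
      simp only [Function.iterate_zero, id_eq, Nat.add_zero]
      congr 1
      exact (Fin.ext (Nat.mod_eq_of_lt l.isLt)).symm
    | succ s ih =>
      intro a l
      rw [Function.iterate_succ_apply, ih (Θ a) l, hΘ]
      have hmod : ((l : ℕ) + (s + 1)) % n = (((l : ℕ) + s) % n + 1) % n := by
        rw [← Nat.add_assoc]
        exact (Nat.mod_add_mod _ _ _).symm
      split_ifs with h
      · congr 1
        apply Fin.ext
        show ((l : ℕ) + s) % n + 1 = ((l : ℕ) + (s + 1)) % n
        rw [hmod, Nat.mod_eq_of_lt h]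
      · have hm : ((l : ℕ) + s) % n < n := Nat.mod_lt _ hn
        have h' : ¬ (((l : ℕ) + s) % n + 1 < n) := h
        have hone : ((l : ℕ) + s) % n + 1 = n := by omega
        congr 1
        apply Fin.ext
        show (0 : ℕ) = ((l : ℕ) + (s + 1)) % n
        rw [hmod, hone, Nat.mod_self]
  -- the projections of `Ef x`
  have hprojE : ∀ (j : ℕ) (hj : j < n) (x : Fin n → L) (l : Fin n),
      proj j (Ef x) l = μ ^ (j * (l : ℕ)) • x ⟨j, hj⟩ := by
    intro j hj x l
    rw [hproj, Pi.smul_apply, Finset.sum_apply]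
    have hs : ∀ s ∈ Finset.range n, ((μ⁻¹) ^ (j * s) • Θ^[s] (Ef x)) l
        = ∑ i : Fin n, (μ ^ ((i : ℕ) * (l : ℕ)) * (μ ^ (i : ℕ) * (μ⁻¹) ^ j) ^ s) • x i := by
      intro s _
      rw [Pi.smul_apply, hiter s (Ef x) l]
      show (μ⁻¹) ^ (j * s) • (∑ i : Fin n, μ ^ ((i : ℕ) * (((l : ℕ) + s) % n)) • x i) = _
      rw [Finset.smul_sum]
      refine Finset.sum_congr rfl fun i _ => ?_
      rw [smul_smul, aux_pow_mul_mod hμ1 (i : ℕ) ((l : ℕ) + s), Nat.mul_add, pow_add,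
        mul_pow, ← pow_mul, ← pow_mul, mul_comm (j : ℕ) s, mul_comm (i : ℕ) s]
      ring_nf
    rw [Finset.sum_congr rfl hs, Finset.sum_comm]
    have h2 : ∀ i : Fin n,
        ∑ s ∈ Finset.range n, (μ ^ ((i : ℕ) * (l : ℕ)) * (μ ^ (i : ℕ) * (μ⁻¹) ^ j) ^ s) • x i
        = (μ ^ ((i : ℕ) * (l : ℕ)) * if (i : ℕ) = j then ((n : ℕ) : 𝕜) else 0) • x i := fun i => by
      rw [← Finset.sum_smul, ← Finset.mul_sum, aux_orth hn hμ i.isLt hj]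
    rw [Finset.sum_congr rfl fun i _ => h2 i]
    have h3 : ∀ i : Fin n,
        (μ ^ ((i : ℕ) * (l : ℕ)) * if (i : ℕ) = j then ((n : ℕ) : 𝕜) else 0) • x i
        = if i = (⟨j, hj⟩ : Fin n) then (μ ^ (j * (l : ℕ)) * ((n : ℕ) : 𝕜)) • x i else 0 := by
      intro i
      by_cases h : (i : ℕ) = j
      · rw [if_pos h, if_pos (Fin.ext h), h]
      · rw [if_neg h, if_neg (fun hv => h (by rw [hv])), mul_zero, zero_smul]
    rw [Finset.sum_congr rfl fun i _ => h3 i, Finset.sum_ite_eq' Finset.univ,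
      if_pos (Finset.mem_univ _), smul_smul, mul_comm (μ ^ (j * (l : ℕ))) ((n : ℕ) : 𝕜),
      ← mul_assoc, inv_mul_cancel₀ hn0, one_mul]
  -- main computation
  have hmain : ∀ x y : Fin n → L, Ef (takiffBracket n x y) = Bc (Ef x) (Ef y) := by
    intro x y
    funext l
    have hR : Bc (Ef x) (Ef y) l = ∑ i : Fin n, ∑ j : Fin n,
        if (i : ℕ) + (j : ℕ) < n
        then μ ^ (((i : ℕ) + (j : ℕ)) * (l : ℕ)) • ⁅x i, y j⁆ else 0 := by
      rw [hBc, Finset.sum_apply, Finset.sum_range]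
      refine Finset.sum_congr rfl fun i _ => ?_
      rw [Finset.sum_apply, Finset.sum_range]
      refine Finset.sum_congr rfl fun j _ => ?_
      rw [apply_ite (fun f : Fin n → L => f l), Pi.zero_apply]
      by_cases h : (i : ℕ) + (j : ℕ) < n
      · rw [if_pos (by omega : (i : ℕ) + (j : ℕ) ≤ n - 1), if_pos h,
          hprojE (i : ℕ) i.isLt x l, hprojE (j : ℕ) j.isLt y l, smul_lie, lie_smul, smul_smul,
          ← pow_add, ← Nat.add_mul]
      · rw [if_neg (by omega : ¬ (i : ℕ) + (j : ℕ) ≤ n - 1), if_neg h]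
    have hL : Ef (takiffBracket n x y) l = ∑ i : Fin n, ∑ j : Fin n,
        if (i : ℕ) + (j : ℕ) < n
        then μ ^ (((i : ℕ) + (j : ℕ)) * (l : ℕ)) • ⁅x i, y j⁆ else 0 := by
      show ∑ m : Fin n, μ ^ ((m : ℕ) * (l : ℕ)) • (∑ i : Fin n, ∑ j : Fin n,
        if (i : ℕ) + (j : ℕ) = (m : ℕ) then ⁅x i, y j⁆ else 0) = _
      have e1 : ∀ m : Fin n, μ ^ ((m : ℕ) * (l : ℕ)) • (∑ i : Fin n, ∑ j : Fin n,
          if (i : ℕ) + (j : ℕ) = (m : ℕ) then ⁅x i, y j⁆ else 0)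
          = ∑ i : Fin n, ∑ j : Fin n, (if (i : ℕ) + (j : ℕ) = (m : ℕ)
            then μ ^ (((i : ℕ) + (j : ℕ)) * (l : ℕ)) • ⁅x i, y j⁆ else 0) := by
        intro m
        rw [Finset.smul_sum]
        refine Finset.sum_congr rfl fun i _ => ?_
        rw [Finset.smul_sum]
        refine Finset.sum_congr rfl fun j _ => ?_
        by_cases h : (i : ℕ) + (j : ℕ) = (m : ℕ)
        · rw [if_pos h, if_pos h, h]
        · rw [if_neg h, if_neg h, smul_zero]
      rw [Finset.sum_congr rfl fun m _ => e1 m, Finset.sum_comm]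
      refine Finset.sum_congr rfl fun i _ => ?_
      rw [Finset.sum_comm]
      refine Finset.sum_congr rfl fun j _ => ?_
      by_cases h : (i : ℕ) + (j : ℕ) < n
      · rw [if_pos h]
        have e2 : ∀ m : Fin n, (if (i : ℕ) + (j : ℕ) = (m : ℕ)
            then μ ^ (((i : ℕ) + (j : ℕ)) * (l : ℕ)) • ⁅x i, y j⁆ else 0)
            = if m = (⟨(i : ℕ) + (j : ℕ), h⟩ : Fin n)
              then μ ^ (((i : ℕ) + (j : ℕ)) * (l : ℕ)) • ⁅x i, y j⁆ else 0 := by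
          intro m
          refine if_congr ?_ rfl rfl
          constructor
          · intro hv; exact Fin.ext hv.symm
          · intro hv; rw [hv]
        rw [Finset.sum_congr rfl fun m _ => e2 m, Finset.sum_ite_eq' Finset.univ,
          if_pos (Finset.mem_univ _)]
      · rw [if_neg h]
        refine Finset.sum_eq_zero fun m _ => ?_
        exact if_neg (fun hv => h (by rw [hv]; exact m.isLt))
    exact hL.trans hR.symm
  refine ⟨{ toFun := Ef
            invFun := Ff
            map_add' := ?_
            map_smul' := ?_
            left_inv := fun x => funext fun i => hFE x i
            right_inv := fun x => funext fun l => hEF x l }, ?_⟩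
  · intro x y
    funext l
    show ∑ i : Fin n, μ ^ ((i : ℕ) * (l : ℕ)) • (x i + y i)
      = (∑ i : Fin n, μ ^ ((i : ℕ) * (l : ℕ)) • x i) + ∑ i : Fin n, μ ^ ((i : ℕ) * (l : ℕ)) • y i
    rw [← Finset.sum_add_distrib]
    exact Finset.sum_congr rfl fun i _ => smul_add _ _ _
  · intro c x
    funext l
    show ∑ i : Fin n, μ ^ ((i : ℕ) * (l : ℕ)) • (c • x i)
      = c • ∑ i : Fin n, μ ^ ((i : ℕ) * (l : ℕ)) • x i
    rw [Finset.smul_sum]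
    exact Finset.sum_congr rfl fun i _ => smul_comm _ _ _
  · intro x y
    exact hmain x y
end
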